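/- arXiv:1812.04263 — 3 statements merged into one kernel-verified Lean document; each statement's English description precedes it below -/
import Mathlib

section
/- If a graph G admits a circular layout in which at most one bundled crossing occurs, then removing the (at most 8) endpoints of the at most 4 frame edges leaves a graph all of whose components are outerplanar; consequently G has treewidth at most 10. -/
open SimpleGraph

/-- `b` lies strictly between `a` and `c`. -/
def StrictBtw (a b c : ℕ) : Prop := min a c < b ∧ b < max a c

/-- With vertices placed on a circle according to `f` (cutting the circle open to a line),
two chords cross iff their endpoints interleave: exactly one of `x, y` lies between `u, v`. -/
def ChordsCross {V : Type} (f : V → ℕ) (u v x y : V) : Prop :=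
  Xor' (StrictBtw (f u) (f x) (f v)) (StrictBtw (f u) (f y) (f v))

def EdgesCross {V : Type} (f : V → ℕ) (e e' : Sym2 V) : Prop :=
  ∃ u v x y : V, e = s(u, v) ∧ e' = s(x, y) ∧
    u ≠ x ∧ u ≠ y ∧ v ≠ x ∧ v ≠ y ∧ ChordsCross f u v x y

/-- `G` is outerplanar: it has a circular (one-page) layout with no crossing chords. -/
def Outerplanar {V : Type} (G : SimpleGraph V) : Prop :=
  ∃ f : V → ℕ, Function.Injective f ∧
    ∀ e ∈ G.edgeSet, ∀ e' ∈ G.edgeSet, ¬ EdgesCross f e e'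

/-- `G` admits a circular layout whose crossings can be grouped into at most `k`
bundled crossings: each bundled crossing is a pair of bundles of edges, edges within a
bundle are pairwise non-crossing, any two edges from opposite bundles of a bundled
crossing cross, and every crossing pair of edges is covered by some bundled crossing. -/
def CircBundledLE {V : Type} (G : SimpleGraph V) (k : ℕ) : Prop :=
  ∃ f : V → ℕ, Function.Injective f ∧
  ∃ bundles : Fin k → Set (Sym2 V) × Set (Sym2 V),
    (∀ i, (bundles i).1 ⊆ G.edgeSet ∧ (bundles i).2 ⊆ G.edgeSet) ∧
    (∀ i, ∀ e ∈ (bundles i).1, ∀ e' ∈ (bundles i).1, ¬ EdgesCross f e e') ∧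
    (∀ i, ∀ e ∈ (bundles i).2, ∀ e' ∈ (bundles i).2, ¬ EdgesCross f e e') ∧
    (∀ i, ∀ e ∈ (bundles i).1, ∀ e' ∈ (bundles i).2, EdgesCross f e e') ∧
    (∀ e ∈ G.edgeSet, ∀ e' ∈ G.edgeSet, EdgesCross f e e' →
      ∃ i, (e ∈ (bundles i).1 ∧ e' ∈ (bundles i).2) ∨
           (e' ∈ (bundles i).1 ∧ e ∈ (bundles i).2))

structure TreeDecomposition {V : Type} (G : SimpleGraph V) where
  ι : Type
  tree : SimpleGraph ι
  isTree : tree.IsTree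
  bag : ι → Set V
  mem_bag : ∀ v : V, ∃ i, v ∈ bag i
  edge_bag : ∀ ⦃u v : V⦄, G.Adj u v → ∃ i, u ∈ bag i ∧ v ∈ bag i
  bag_connected : ∀ v : V, (tree.induce {i | v ∈ bag i}).Connected

/-- `G` has treewidth at most `t`: some tree decomposition has all bags of size `≤ t+1`. -/
def TreewidthLE {V : Type} (G : SimpleGraph V) (t : ℕ) : Prop :=
  ∃ T : TreeDecomposition G, ∀ i, Nat.card (T.bag i) ≤ t + 1

open scoped Classical

/-- Value-level chord interleaving. -/
def IL (a b c d : ℕ) : Prop := Xor' (StrictBtw a c b) (StrictBtw a d b)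

lemma chordsCross_eq_IL {V : Type} (f : V → ℕ) (u v x y : V) :
    ChordsCross f u v x y ↔ IL (f u) (f v) (f x) (f y) := Iff.rfl

lemma IL_swap_left {a b c d : ℕ} : IL a b c d ↔ IL b a c d := by
  unfold IL StrictBtw
  rw [min_comm, max_comm]

lemma IL_swap_right {a b c d : ℕ} : IL a b c d ↔ IL a b d c := by
  unfold IL
  exact Eq.to_iff (xor_comm _ _)

lemma ec_intro {V : Type} (f : V → ℕ) {u v x y : V}
    (h1 : u ≠ x) (h2 : u ≠ y) (h3 : v ≠ x) (h4 : v ≠ y)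
    (hIL : IL (f u) (f v) (f x) (f y)) : EdgesCross f s(u, v) s(x, y) :=
  ⟨u, v, x, y, rfl, rfl, h1, h2, h3, h4, hIL⟩

/-- Extraction of value-level facts from a crossing, relative to given representatives. -/
lemma ec_vals {V : Type} (f : V → ℕ) {u v x y : V}
    (h : EdgesCross f s(u, v) s(x, y)) :
    u ≠ x ∧ u ≠ y ∧ v ≠ x ∧ v ≠ y ∧ IL (f u) (f v) (f x) (f y) := by
  obtain ⟨u', v', x', y', he, he', d1, d2, d3, d4, hil⟩ := h
  rw [Sym2.eq_iff] at he he'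
  rw [chordsCross_eq_IL] at hil
  rcases he with ⟨rfl, rfl⟩ | ⟨rfl, rfl⟩ <;> rcases he' with ⟨rfl, rfl⟩ | ⟨rfl, rfl⟩
  · exact ⟨d1, d2, d3, d4, hil⟩
  · exact ⟨d2, d1, d4, d3, IL_swap_right.mp hil⟩
  · exact ⟨d3, d4, d1, d2, IL_swap_left.mp hil⟩
  · exact ⟨d4, d3, d2, d1, IL_swap_left.mp (IL_swap_right.mp hil)⟩

lemma not_edgesCross_self {V : Type} (f : V → ℕ) (e : Sym2 V) : ¬ EdgesCross f e e := by
  intro h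
  obtain ⟨u, v, x, y, he, he', d1, d2, d3, d4, _⟩ := h
  rw [he, Sym2.eq_iff] at he'
  rcases he' with ⟨h1, _⟩ | ⟨h1, _⟩
  · exact d1 h1
  · exact d2 h1


/-- Parent-pointer graph. -/
def ptGraph {ι : Type} (p : ι → ι) : SimpleGraph ι where
  Adj x y := x ≠ y ∧ (p x = y ∨ p y = x)
  symm := ⟨by
    rintro x y ⟨hne, h | h⟩
    exacts [⟨hne.symm, Or.inr h⟩, ⟨hne.symm, Or.inl h⟩]⟩
  loopless := ⟨by rintro x ⟨hne, -⟩; exact hne rfl⟩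

lemma ptGraph_reachable_root {ι : Type} (p : ι → ι) (dep : ι → ℕ) (r : ι)
    (hd : ∀ x, x ≠ r → dep (p x) < dep x) :
    ∀ x, (ptGraph p).Reachable x r := by
  have key : ∀ n x, dep x ≤ n → (ptGraph p).Reachable x r := by
    intro n
    induction n with
    | zero =>
      intro x hx
      by_cases h : x = r
      · subst h; exact Reachable.refl _
      · exact absurd (hd x h) (by omega)
    | succ n ih =>
      intro x hx
      by_cases h : x = r
      · subst h; exact Reachable.refl _
      · have hlt := hd x h
        have hne : x ≠ p x := fun he => by rw [← he] at hlt; omega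
        have hadj : (ptGraph p).Adj x (p x) := ⟨hne, Or.inl rfl⟩
        exact hadj.reachable.trans (ih (p x) (by omega))
  exact fun x => key (dep x) x le_rfl

lemma ptGraph_isAcyclic {ι : Type} (p : ι → ι) (dep : ι → ℕ) (r : ι)
    (hr : p r = r) (hd : ∀ x, x ≠ r → dep (p x) < dep x) : (ptGraph p).IsAcyclic := by
  classical
  intro v c hc
  have hsupne : v ∈ c.support := Walk.start_mem_support c
  obtain ⟨u, hu, hmax⟩ :=
    c.support.toFinset.exists_max_image dep ⟨v, List.mem_toFinset.mpr hsupne⟩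
  rw [List.mem_toFinset] at hu
  have hmax' : ∀ w ∈ c.support, dep w ≤ dep u := fun w hw =>
    hmax w (List.mem_toFinset.mpr hw)
  have hc' : (c.rotate u hu).IsCycle := (Walk.isCycle_rotate ..).mpr hc
  have hsupp : ∀ w ∈ (c.rotate u hu).support, dep w ≤ dep u := by
    intro w hw
    rw [Walk.support_eq_cons] at hw
    rcases hw with _ | hw
    · exact le_rfl
    · have hperm := Walk.support_rotate c u hu
      have : w ∈ c.support.tail := hperm.mem_iff.mp (by assumption)
      exact hmax' w (List.mem_of_mem_tail this)
  have hpar : ∀ w, (ptGraph p).Adj u w → w ∈ (c.rotate u hu).support → p u = w := by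
    intro w hadj hwmem
    rcases hadj.2 with h | h
    · exact h
    · exfalso
      have hwne : w ≠ r := by
        intro he; subst he
        exact hadj.1 (by rw [← h, hr])
      have h1 := hd w hwne
      rw [h] at h1
      have h2 := hsupp w hwmem
      omega
  have hlen : 3 ≤ (c.rotate u hu).length := hc'.three_le_length
  cases hw : c.rotate u hu with
  | nil => rw [hw] at hlen; simp at hlen
  | cons h1 q =>
    rename_i w1
    cases hwr : (c.rotate u hu).reverse with
    | nil =>
      have := congrArg Walk.length hwr
      rw [Walk.length_reverse] at this
      rw [this] at hlen; simp at hlen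
    | cons h2 q2 =>
      rename_i w2
      have hadjw1 : (ptGraph p).Adj u w1 := h1
      have hadjw2 : (ptGraph p).Adj u w2 := h2
      have hw1mem : w1 ∈ (c.rotate u hu).support := by
        rw [hw, Walk.support_cons]
        exact List.mem_cons_of_mem _ q.start_mem_support
      have hw2mem : w2 ∈ (c.rotate u hu).support := by
        have : w2 ∈ (c.rotate u hu).reverse.support := by
          rw [hwr, Walk.support_cons]
          exact List.mem_cons_of_mem _ q2.start_mem_support
        rwa [Walk.support_reverse, List.mem_reverse] at this
      have hpw1 := hpar w1 hadjw1 hw1mem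
      have hpw2 := hpar w2 hadjw2 hw2mem
      have hw12 : w1 = w2 := by rw [← hpw1, hpw2]
      subst hw12
      have hedges : (c.rotate u hu).edges = s(u, w1) :: q.edges := by
        rw [hw, Walk.edges_cons]
      have hrevedges : (c.rotate u hu).edges.reverse = s(u, w1) :: q2.edges := by
        rw [← Walk.edges_reverse, hwr, Walk.edges_cons]
      have hnodup : (c.rotate u hu).edges.Nodup := hc'.edges_nodup
      have hlen' : 3 ≤ (c.rotate u hu).edges.length := by
        rwa [Walk.length_edges]
      rw [hedges] at hrevedges hnodup hlen'
      rcases hqe : q.edges.reverse with _ | ⟨a, rest⟩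
      · have : q.edges = [] := by simpa using congrArg List.reverse hqe
        rw [this] at hlen'; simp at hlen'
      · have : s(u, w1) :: q2.edges = a :: (rest ++ [s(u, w1)]) := by
          rw [← hrevedges]
          simp [hqe]
        have ha : a = s(u, w1) := (List.cons_eq_cons.mp this).1.symm
        have hmem : s(u, w1) ∈ q.edges := by
          have : s(u, w1) ∈ q.edges.reverse := by rw [hqe, ha]; simp
          simpa using this
        rw [List.nodup_cons] at hnodup
        exact hnodup.1 hmem



lemma ptGraph_isTree {ι : Type} (p : ι → ι) (dep : ι → ℕ) (r : ι)
    (hr : p r = r) (hd : ∀ x, x ≠ r → dep (p x) < dep x) : (ptGraph p).IsTree := by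
  refine ⟨(connected_iff _).mpr ⟨?_, ⟨r⟩⟩, ptGraph_isAcyclic p dep r hr hd⟩
  intro x y
  exact (ptGraph_reachable_root p dep r hd x).trans
    (ptGraph_reachable_root p dep r hd y).symm


section Outer

variable {W : Type} (H : SimpleGraph W) (g : W → ℕ)

def EdgV (j k : ℕ) : Prop := ∃ u v, H.Adj u v ∧ g u = j ∧ g v = k

lemma EdgV_symm {j k : ℕ} (h : EdgV H g j k) : EdgV H g k j := by
  obtain ⟨u, v, h, h1, h2⟩ := h; exact ⟨v, u, h.symm, h2, h1⟩

noncomputable def splitPt (a b : ℕ) : ℕ :=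
  if _ : {j | a < j ∧ j < b ∧ EdgV H g j b}.Nonempty then
    sInf {j | a < j ∧ j < b ∧ EdgV H g j b}
  else if _ : {k | a < k ∧ k < b ∧ EdgV H g a k}.Nonempty then
    sSup {k | a < k ∧ k < b ∧ EdgV H g a k}
  else if _ : {z | a < z ∧ z < b ∧ z ∈ Set.range g}.Nonempty then
    sInf {z | a < z ∧ z < b ∧ z ∈ Set.range g}
  else a

lemma splitPt_bounds {a b : ℕ} (hab : a ≤ b) :
    a ≤ splitPt H g a b ∧ splitPt H g a b ≤ b := by
  unfold splitPt
  split_ifs with h1 h2 h3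
  · have := Nat.sInf_mem h1; exact ⟨this.1.le, this.2.1.le⟩
  · have hbdd : BddAbove {k | a < k ∧ k < b ∧ EdgV H g a k} :=
      ⟨b, fun x hx => hx.2.1.le⟩
    have := Nat.sSup_mem h2 hbdd; exact ⟨this.1.le, this.2.1.le⟩
  · have := Nat.sInf_mem h3; exact ⟨this.1.le, this.2.1.le⟩
  · exact ⟨le_rfl, hab⟩

lemma splitPt_interior {a b : ℕ} {z : ℕ} (hz : a < z) (hz' : z < b) (hzr : z ∈ Set.range g) :
    a < splitPt H g a b ∧ splitPt H g a b < b := by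
  unfold splitPt
  split_ifs with h1 h2 h3
  · have := Nat.sInf_mem h1; exact ⟨this.1, this.2.1⟩
  · have hbdd : BddAbove {k | a < k ∧ k < b ∧ EdgV H g a k} :=
      ⟨b, fun x hx => hx.2.1.le⟩
    have := Nat.sSup_mem h2 hbdd; exact ⟨this.1, this.2.1⟩
  · have := Nat.sInf_mem h3; exact ⟨this.1, this.2.1⟩
  · exact absurd ⟨hz, hz', hzr⟩ (fun hc => h3 ⟨z, hc⟩)

variable (hNC : ∀ {j k j' k' : ℕ}, EdgV H g j k → EdgV H g j' k' →
    j < j' → j' < k → k < k' → False)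

include hNC in
lemma splitPt_no_straddle {a b j k : ℕ}
    (he : EdgV H g j k) (haj : a ≤ j) (hjk : j < k) (hkb : k ≤ b)
    (hne : ¬(j = a ∧ k = b)) : ¬(j < splitPt H g a b ∧ splitPt H g a b < k) := by
  rintro ⟨hjs, hsk⟩
  unfold splitPt at hjs hsk
  split_ifs at hjs hsk with h1 h2 h3
  · have hs := Nat.sInf_mem h1
    rcases eq_or_lt_of_le hkb with rfl | hkb'
    · rcases eq_or_lt_of_le haj with rfl | haj'
      · exact hne ⟨rfl, rfl⟩
      · have hmem : j ∈ {j' | a < j' ∧ j' < k ∧ EdgV H g j' k} := ⟨haj', hjk, he⟩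
        exact absurd (Nat.sInf_le hmem) (by omega)
    · exact hNC he hs.2.2 hjs hsk hkb'
  · have hbdd : BddAbove {k | a < k ∧ k < b ∧ EdgV H g a k} :=
      ⟨b, fun x hx => hx.2.1.le⟩
    have hs := Nat.sSup_mem h2 hbdd
    rcases eq_or_lt_of_le haj with rfl | haj'
    · rcases eq_or_lt_of_le hkb with rfl | hkb'
      · exact hne ⟨rfl, rfl⟩
      · have hmem : k ∈ {k' | a < k' ∧ k' < b ∧ EdgV H g a k'} := ⟨hjk, hkb', he⟩
        exact absurd (le_csSup hbdd hmem) (by omega)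
    · rcases eq_or_lt_of_le hkb with rfl | hkb'
      · exact h1 ⟨j, haj', by omega, he⟩
      · exact hNC hs.2.2 he haj' hjs hsk
  · have hs := Nat.sInf_mem h3
    rcases eq_or_lt_of_le haj with rfl | haj'
    · rcases eq_or_lt_of_le hkb with rfl | hkb'
      · exact hne ⟨rfl, rfl⟩
      · exact h2 ⟨k, by omega, hkb', he⟩
    · have hjr : j ∈ Set.range g := by
        obtain ⟨u, v, _, h1', _⟩ := he; exact ⟨u, h1'⟩
      have hmem : j ∈ {z | a < z ∧ z < b ∧ z ∈ Set.range g} := ⟨haj', by omega, hjr⟩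
      exact absurd (Nat.sInf_le hmem) (by omega)
  · omega

def InvP (a b : ℕ) : Prop := ∀ j k, EdgV H g j k → j < k →
  ¬(j < a ∧ a < k ∧ k < b) ∧ ¬(a < j ∧ j < b ∧ b < k)

include hNC in
lemma InvP_children {a b : ℕ} (hab : a ≤ b) (hInv : InvP H g a b) :
    InvP H g a (splitPt H g a b) ∧ InvP H g (splitPt H g a b) b := by
  set s := splitPt H g a b with hs
  obtain ⟨has, hsb⟩ := splitPt_bounds H g hab
  constructor
  · intro j k he hjk
    constructor
    · rintro ⟨hja, hak, hks⟩
      exact (hInv j k he hjk).1 ⟨hja, hak, by omega⟩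
    · rintro ⟨haj, hjs, hsk⟩
      by_cases hkb : k ≤ b
      · exact splitPt_no_straddle H g hNC he (le_of_lt haj) hjk hkb
          (by rintro ⟨rfl, -⟩; omega) ⟨hjs, hsk⟩
      · exact (hInv j k he hjk).2 ⟨haj, by omega, by omega⟩
  · intro j k he hjk
    constructor
    · rintro ⟨hjs, hsk, hkb⟩
      by_cases hja : j < a
      · exact (hInv j k he hjk).1 ⟨hja, by omega, hkb⟩
      · exact splitPt_no_straddle H g hNC he (by omega) hjk (le_of_lt hkb)
          (by rintro ⟨-, rfl⟩; omega) ⟨hjs, hsk⟩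
    · rintro ⟨hsj, hjb, hbk⟩
      exact (hInv j k he hjk).2 ⟨by omega, hjb, hbk⟩

variable (N : ℕ)

noncomputable def ivl : List Bool → ℕ × ℕ
  | [] => (0, N + 1)
  | d :: l =>
      let q := ivl l
      if d then (q.1, splitPt H g q.1 q.2) else (splitPt H g q.1 q.2, q.2)

lemma ivl_le : ∀ l : List Bool, (ivl H g N l).1 ≤ (ivl H g N l).2 := by
  intro l
  induction l with
  | nil => simp [ivl]
  | cons d l ih =>
    obtain ⟨h1, h2⟩ := splitPt_bounds H g ih
    cases d <;> simp [ivl] <;> assumption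

include hNC in
lemma ivl_inv (hg : ∀ w, 1 ≤ g w ∧ g w ≤ N) :
    ∀ l : List Bool, InvP H g (ivl H g N l).1 (ivl H g N l).2 := by
  intro l
  induction l with
  | nil =>
    intro j k he hjk
    obtain ⟨u, v, _, h1, h2⟩ := he
    have := hg u; have := hg v
    simp [ivl]; omega
  | cons d l ih =>
    have h2 := InvP_children H g hNC (ivl_le H g N l) ih
    cases d
    · have e : ivl H g N (false :: l)
          = (splitPt H g (ivl H g N l).1 (ivl H g N l).2, (ivl H g N l).2) := by
        simp [ivl]
      rw [e]
      exact h2.2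
    · have e : ivl H g N (true :: l)
          = ((ivl H g N l).1, splitPt H g (ivl H g N l).1 (ivl H g N l).2) := by
        simp [ivl]
      rw [e]
      exact h2.1

lemma ivl_cons_true (l : List Bool) :
    ivl H g N (true :: l) = ((ivl H g N l).1, splitPt H g (ivl H g N l).1 (ivl H g N l).2) := by
  simp [ivl]

lemma ivl_cons_false (l : List Bool) :
    ivl H g N (false :: l) = (splitPt H g (ivl H g N l).1 (ivl H g N l).2, (ivl H g N l).2) := by
  simp [ivl]

noncomputable def bagOf (l : List Bool) : Set W :=
  {w | g w = (ivl H g N l).1 ∨ g w = (ivl H g N l).2 ∨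
    g w = splitPt H g (ivl H g N l).1 (ivl H g N l).2}

lemma bag_mem_aux (w : W) :
    ∀ n (l : List Bool), (ivl H g N l).2 - (ivl H g N l).1 ≤ n →
      (ivl H g N l).1 < g w → g w < (ivl H g N l).2 → ∃ l', w ∈ bagOf H g N l' := by
  intro n
  induction n with
  | zero => intro l h1 h2 h3; omega
  | succ n ih =>
    intro l h1 h2 h3
    obtain ⟨hs1, hs2⟩ := splitPt_interior H g h2 h3 ⟨w, rfl⟩
    rcases lt_trichotomy (g w) (splitPt H g (ivl H g N l).1 (ivl H g N l).2) with hlt | heq | hgt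
    · refine ih (true :: l) ?_ ?_ ?_ <;> rw [ivl_cons_true] <;> simp <;> omega
    · exact ⟨l, Or.inr (Or.inr heq)⟩
    · refine ih (false :: l) ?_ ?_ ?_ <;> rw [ivl_cons_false] <;> simp <;> omega

lemma bag_edge_aux (hNC : ∀ {j k j' k' : ℕ}, EdgV H g j k → EdgV H g j' k' →
      j < j' → j' < k → k < k' → False) (u v : W) (he : H.Adj u v) (huv : g u < g v) :
    ∀ n (l : List Bool), (ivl H g N l).2 - (ivl H g N l).1 ≤ n →
      (ivl H g N l).1 ≤ g u → g v ≤ (ivl H g N l).2 →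
      ∃ l', u ∈ bagOf H g N l' ∧ v ∈ bagOf H g N l' := by
  intro n
  induction n with
  | zero => intro l h1 h2 h3; omega
  | succ n ih =>
    intro l h1 h2 h3
    by_cases hab : g u = (ivl H g N l).1 ∧ g v = (ivl H g N l).2
    · exact ⟨l, Or.inl hab.1, Or.inr (Or.inl hab.2)⟩
    · have hint : ∃ z, (ivl H g N l).1 < z ∧ z < (ivl H g N l).2 ∧ z ∈ Set.range g := by
        rcases eq_or_lt_of_le h2 with hx | hx
        · exact ⟨g v, by omega, by rcases eq_or_lt_of_le h3 with h | h; exact absurd ⟨hx.symm, h⟩ hab; omega, ⟨v, rfl⟩⟩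
        · exact ⟨g u, hx, by omega, ⟨u, rfl⟩⟩
      obtain ⟨z, hz1, hz2, hz3⟩ := hint
      obtain ⟨hs1, hs2⟩ := splitPt_interior H g hz1 hz2 hz3
      have hnostr := splitPt_no_straddle H g hNC
        (⟨u, v, he, rfl, rfl⟩ : EdgV H g (g u) (g v)) h2 huv h3
        (by intro hc; exact hab ⟨hc.1, hc.2⟩)
      by_cases hvs : g v ≤ splitPt H g (ivl H g N l).1 (ivl H g N l).2
      · refine ih (true :: l) ?_ ?_ ?_ <;> rw [ivl_cons_true] <;> simp <;> omega
      · have hus : splitPt H g (ivl H g N l).1 (ivl H g N l).2 ≤ g u := by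
          by_contra hc
          exact hnostr ⟨by omega, by omega⟩
        refine ih (false :: l) ?_ ?_ ?_ <;> rw [ivl_cons_false] <;> simp <;> omega

lemma ivl_nest : ∀ (m l : List Bool),
    (ivl H g N l).1 ≤ (ivl H g N (m ++ l)).1 ∧ (ivl H g N (m ++ l)).2 ≤ (ivl H g N l).2 := by
  intro m l
  induction m with
  | nil => simp
  | cons d m ih =>
    obtain ⟨hb1, hb2⟩ := splitPt_bounds H g (ivl_le H g N (m ++ l))
    cases d
    · rw [List.cons_append, ivl_cons_false]; exact ⟨le_trans ih.1 hb1, ih.2⟩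
    · rw [List.cons_append, ivl_cons_true]; exact ⟨ih.1, le_trans hb2 ih.2⟩

lemma list_tri : ∀ (t t' : List Bool), t <:+ t' ∨ t' <:+ t ∨
    ∃ c d d', d ≠ d' ∧ (d :: c) <:+ t ∧ (d' :: c) <:+ t' := by
  intro t t'
  induction t' with
  | nil => exact Or.inr (Or.inl (List.nil_suffix))
  | cons e t'' ih =>
    rcases ih with h | h | ⟨c, d, d', hdd, h1, h2⟩
    · exact Or.inl (h.trans (List.suffix_cons e t''))
    · obtain ⟨m, rfl⟩ := h
      rcases List.eq_nil_or_concat m with rfl | ⟨L, d0, rfl⟩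
      · exact Or.inl (by simpa using List.suffix_cons e t'')
      · have hsuf : (d0 :: t'') <:+ (L.concat d0 ++ t'') := ⟨L, by simp⟩
        by_cases hd : d0 = e
        · subst hd; exact Or.inr (Or.inl hsuf)
        · exact Or.inr (Or.inr ⟨t'', d0, e, hd, hsuf, List.suffix_refl _⟩)
    · exact Or.inr (Or.inr ⟨c, d, d', hdd, h1, h2.trans (List.suffix_cons e t'')⟩)

lemma bagOf_closed {l : List Bool} {w : W} (hw : w ∈ bagOf H g N l) :
    (ivl H g N l).1 ≤ g w ∧ g w ≤ (ivl H g N l).2 := by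
  obtain ⟨hb1, hb2⟩ := splitPt_bounds H g (ivl_le H g N l)
  rcases hw with h | h | h <;> rw [h] <;> constructor <;> first | rfl | omega
  
lemma bag_conn (hg : ∀ w', 1 ≤ g w' ∧ g w' ≤ N) (w : W) (hne : ∃ l, w ∈ bagOf H g N l) :
    ((ptGraph (fun l : List Bool => l.tail)).induce {l | w ∈ bagOf H g N l}).Connected := by
  classical
  set St := {l : List Bool | w ∈ bagOf H g N l} with hSt
  -- minimal length element
  have hLne : {n | ∃ l ∈ St, l.length = n}.Nonempty := by
    obtain ⟨l, hl⟩ := hne; exact ⟨l.length, l, hl, rfl⟩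
  obtain ⟨t0, ht0, ht0len⟩ := Nat.sInf_mem hLne
  have ht0min : ∀ l ∈ St, t0.length ≤ l.length := by
    intro l hl
    rw [ht0len]
    exact Nat.sInf_le ⟨l, hl, rfl⟩
  -- summit implies suffix of everything in St
  have hsummit : ∀ l ∈ St, (ivl H g N l).1 < g w → g w < (ivl H g N l).2 →
      ∀ l'' ∈ St, l <:+ l'' := by
    intro l hl hlo hhi l'' hl''
    rcases list_tri l l'' with h | h | ⟨c, d, d', hdd, h1, h2⟩
    · exact h
    · obtain ⟨m, rfl⟩ := h
      rcases List.eq_nil_or_concat m with rfl | ⟨L, d0, rfl⟩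
      · exact List.suffix_refl _
      · exfalso
        have hrw : L.concat d0 ++ l'' = L ++ (d0 :: l'') := by simp
        rw [hrw] at hl hlo hhi
        have hnest := ivl_nest H g N L (d0 :: l'')
        obtain ⟨hb1, hb2⟩ := splitPt_bounds H g (ivl_le H g N l'')
        have hwc := bagOf_closed H g N hl''
        rcases hl'' with hh | hh | hh
        · cases d0
          · rw [ivl_cons_false] at hnest; omega
          · rw [ivl_cons_true] at hnest; omega
        · cases d0
          · rw [ivl_cons_false] at hnest; omega
          · rw [ivl_cons_true] at hnest; omega
        · cases d0
          · rw [ivl_cons_false] at hnest; omega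
          · rw [ivl_cons_true] at hnest; omega
    · exfalso
      obtain ⟨m1, rfl⟩ := h1
      obtain ⟨m2, rfl⟩ := h2
      have hn1 := ivl_nest H g N m1 (d :: c)
      have hn2 := ivl_nest H g N m2 (d' :: c)
      have hwc := bagOf_closed H g N hl''
      obtain ⟨hb1, hb2⟩ := splitPt_bounds H g (ivl_le H g N c)
      cases d <;> cases d'
      · exact hdd rfl
      · rw [ivl_cons_false] at hn1; rw [ivl_cons_true] at hn2; omega
      · rw [ivl_cons_true] at hn1; rw [ivl_cons_false] at hn2; omega
      · exact hdd rfl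
  -- climbing
  have hreach : ∀ n (l : List Bool) (hl : l ∈ St), l.length ≤ n →
      ((ptGraph (fun l : List Bool => l.tail)).induce St).Reachable
        ⟨l, hl⟩ ⟨t0, ht0⟩ := by
    intro n
    induction n with
    | zero =>
      intro l hl hlen
      have hl0 : l = [] := List.length_eq_zero_iff.mp (by omega)
      have ht00 : t0 = [] := List.length_eq_zero_iff.mp (by
        have := ht0min l hl; omega)
      subst hl0; subst ht00
      exact Reachable.refl _
    | succ n ih =>
      intro l hl hlen
      by_cases hlt0 : l = t0
      · exact hlt0 ▸ Reachable.refl _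
      · -- is g w an endpoint of l's interval?
        by_cases hend : g w = (ivl H g N l).1 ∨ g w = (ivl H g N l).2
        · -- climb to parent
          cases l with
          | nil =>
            exfalso
            have h1 := hg w
            have hroot : (ivl H g N ([] : List Bool)) = (0, N+1) := rfl
            rw [hroot] at hend
            simp at hend
            omega
          | cons d l₀ =>
            have hl₀ : l₀ ∈ St := by
              obtain ⟨hb1, hb2⟩ := splitPt_bounds H g (ivl_le H g N l₀)
              cases d
              · rw [hSt, Set.mem_setOf_eq, bagOf]
                rw [ivl_cons_false] at hend
                rcases hend with h | h
                · exact Or.inr (Or.inr h)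
                · exact Or.inr (Or.inl h)
              · rw [hSt, Set.mem_setOf_eq, bagOf]
                rw [ivl_cons_true] at hend
                rcases hend with h | h
                · exact Or.inl h
                · exact Or.inr (Or.inr h)
            have hadj : ((ptGraph (fun l : List Bool => l.tail)).induce St).Adj
                ⟨d :: l₀, hl⟩ ⟨l₀, hl₀⟩ := by
              refine ⟨?_, Or.inl rfl⟩
              intro hc
              have := congrArg List.length hc
              simp at this
            exact hadj.reachable.trans (ih l₀ hl₀ (by simp at hlen ⊢; omega))
        ·
          exfalso
          push_neg at hend
          have hin : (ivl H g N l).1 < g w ∧ g w < (ivl H g N l).2 := by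
            have hwc := bagOf_closed H g N hl
            obtain ⟨h1, h2⟩ := hwc
            omega
          have hsuf := hsummit l hl hin.1 hin.2 t0 ht0
          have hlen2 := ht0min l hl
          have := List.IsSuffix.eq_of_length hsuf (by
            have := hsuf.length_le
            omega)
          exact hlt0 this
  refine (connected_iff _).mpr ⟨?_, ⟨⟨t0, ht0⟩⟩⟩
  intro x y
  exact (hreach x.1.length x.1 x.2 le_rfl).trans (hreach y.1.length y.1 y.2 le_rfl).symm

end Outer


lemma subsingleton_ncard_le_one {α : Type} {s : Set α} (h : s.Subsingleton) : s.ncard ≤ 1 := by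
  rcases h.eq_empty_or_singleton with rfl | ⟨x, rfl⟩ <;> simp

lemma exists_bags {W : Type} [Finite W] (H : SimpleGraph W) (f : W → ℕ)
    (hf : Function.Injective f)
    (hnc : ∀ {u v x y : W}, H.Adj u v → H.Adj x y → u ≠ x → u ≠ y → v ≠ x → v ≠ y →
      ¬ IL (f u) (f v) (f x) (f y)) :
    ∃ bag : List Bool → Set W,
      (∀ l, (bag l).ncard ≤ 3) ∧ (∀ w, ∃ l, w ∈ bag l) ∧
      (∀ u v, H.Adj u v → ∃ l, u ∈ bag l ∧ v ∈ bag l) ∧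
      (∀ w, ((ptGraph (fun l : List Bool => l.tail)).induce {l | w ∈ bag l}).Connected) := by
  classical
  set g : W → ℕ := fun w => f w + 1 with hgdef
  have hginj : Function.Injective g := fun a b hab => hf (by simpa [hgdef] using hab)
  obtain ⟨N, hN⟩ := (Set.finite_range g).bddAbove
  have hg : ∀ w, 1 ≤ g w ∧ g w ≤ N := fun w => ⟨by simp [hgdef], hN ⟨w, rfl⟩⟩
  have hNC : ∀ {j k j' k' : ℕ}, EdgV H g j k → EdgV H g j' k' →
      j < j' → j' < k → k < k' → False := by
    intro j k j' k' he he' h1 h2 h3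
    obtain ⟨u, v, hadj, hu, hv⟩ := he
    obtain ⟨x, y, hadj', hx, hy⟩ := he'
    have huv : f u + 1 = j := hu
    have hvv : f v + 1 = k := hv
    have hxv : f x + 1 = j' := hx
    have hyv : f y + 1 = k' := hy
    refine hnc hadj hadj' ?_ ?_ ?_ ?_ ?_
    · intro hc; rw [hc] at huv; omega
    · intro hc; rw [hc] at huv; omega
    · intro hc; rw [hc] at hvv; omega
    · intro hc; rw [hc] at hvv; omega
    · simp only [IL, StrictBtw, Xor', Xor]
      omega
  refine ⟨bagOf H g N, ?_, ?_, ?_, ?_⟩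
  · intro l
    have hsub : bagOf H g N l ⊆
        {w | g w = (ivl H g N l).1} ∪ ({w | g w = (ivl H g N l).2} ∪
          {w | g w = splitPt H g (ivl H g N l).1 (ivl H g N l).2}) := by
      intro w hw
      rcases hw with h | h | h
      · exact Or.inl h
      · exact Or.inr (Or.inl h)
      · exact Or.inr (Or.inr h)
    refine le_trans (Set.ncard_le_ncard hsub (Set.toFinite _)) ?_
    refine le_trans (Set.ncard_union_le _ _) ?_
    have h2 := Set.ncard_union_le {w | g w = (ivl H g N l).2}
      {w | g w = splitPt H g (ivl H g N l).1 (ivl H g N l).2}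
    have e1 : ({w | g w = (ivl H g N l).1} : Set W).ncard ≤ 1 :=
      subsingleton_ncard_le_one (fun a ha b hb => hginj (ha.trans hb.symm))
    have e2 : ({w | g w = (ivl H g N l).2} : Set W).ncard ≤ 1 :=
      subsingleton_ncard_le_one (fun a ha b hb => hginj (ha.trans hb.symm))
    have e3 : ({w | g w = splitPt H g (ivl H g N l).1 (ivl H g N l).2} : Set W).ncard ≤ 1 :=
      subsingleton_ncard_le_one (fun a ha b hb => hginj (ha.trans hb.symm))
    omega
  · intro w
    have hroot : (ivl H g N ([] : List Bool)) = (0, N + 1) := rfl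
    refine bag_mem_aux H g N w (N + 1) [] ?_ ?_ ?_ <;> rw [hroot] <;>
      first
        | omega
        | (have := hg w; omega)
  · intro u v he
    have hroot : (ivl H g N ([] : List Bool)) = (0, N + 1) := rfl
    have hne : g u ≠ g v := fun hc => he.ne (hginj hc)
    rcases lt_or_gt_of_ne hne with hlt | hgt
    · refine bag_edge_aux H g N hNC u v he hlt (N + 1) [] ?_ ?_ ?_ <;> rw [hroot] <;>
        first
          | omega
          | (have := hg u; have := hg v; omega)
    · obtain ⟨l, h1, h2⟩ := bag_edge_aux H g N hNC v u he.symm hgt (N + 1) []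
        (by rw [hroot]; omega) (by rw [hroot]; omega)
        (by rw [hroot]; have := hg u; omega)
      exact ⟨l, h2, h1⟩
  · intro w
    refine bag_conn H g N hg w ?_
    have hroot : (ivl H g N ([] : List Bool)) = (0, N + 1) := rfl
    refine bag_mem_aux H g N w (N + 1) [] ?_ ?_ ?_ <;> rw [hroot] <;>
      first
        | omega
        | (have := hg w; omega)


def glueParent {α : Type} : Option (α × List Bool) → Option (α × List Bool)
  | none => none
  | some (_, []) => none
  | some (c, _ :: l) => some (c, l)

def glueDepth {α : Type} : Option (α × List Bool) → ℕ
  | none => 0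
  | some (_, l) => l.length + 1

lemma glue_isTree {α : Type} : (ptGraph (@glueParent α)).IsTree := by
  refine ptGraph_isTree _ glueDepth none rfl ?_
  intro x hx
  match x with
  | none => exact absurd rfl hx
  | some (c, []) => simp [glueParent, glueDepth]
  | some (c, d :: l) => simp [glueParent, glueDepth]

lemma glue_adj_some {α : Type} (c : α) (l l' : List Bool) :
    (ptGraph (@glueParent α)).Adj (some (c, l)) (some (c, l')) ↔
      (ptGraph (fun t : List Bool => t.tail)).Adj l l' := by
  constructor
  · rintro ⟨hne, h | h⟩
    · cases l with
      | nil => exact absurd h (by simp [glueParent])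
      | cons d t =>
        have : t = l' := by simpa [glueParent] using h
        exact ⟨fun hc => hne (by rw [hc]), Or.inl (by simpa using this)⟩
    · cases l' with
      | nil => exact absurd h (by simp [glueParent])
      | cons d t =>
        have : t = l := by simpa [glueParent] using h
        exact ⟨fun hc => hne (by rw [hc]), Or.inr (by simpa using this)⟩
  · rintro ⟨hne, h | h⟩
    · cases l with
      | nil => exact absurd h.symm (by simpa using hne)
      | cons d t =>
        refine ⟨fun hc => hne (by injection hc with h2; injection h2 with _ h3), ?_⟩
        exact Or.inl (by simp [glueParent]; simpa using h)
    · cases l' with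
      | nil => exact absurd h.symm (by simpa [eq_comm] using hne)
      | cons d t =>
        refine ⟨fun hc => hne (by injection hc with h2; injection h2 with _ h3), ?_⟩
        exact Or.inr (by simp [glueParent]; simpa using h)

lemma tw_glue {V : Type} [Fintype V] (G : SimpleGraph V) (P : Set V) (f : V → ℕ)
    (hf : Function.Injective f) (hS : (Pᶜ).ncard ≤ 8)
    (hcomp : ∀ c : (G.induce P).ConnectedComponent,
      ∀ u v x y : ↥c.supp, ((G.induce P).induce c.supp).Adj u v →
        ((G.induce P).induce c.supp).Adj x y → u ≠ x → u ≠ y → v ≠ x → v ≠ y →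
        ¬ IL (f u.1.1) (f v.1.1) (f x.1.1) (f y.1.1)) :
    TreewidthLE G 10 := by
  classical
  set C := (G.induce P).ConnectedComponent with hC
  have hWfin : ∀ c : C, Finite ↥c.supp := fun c => by infer_instance
  have hfc : ∀ c : C, Function.Injective (fun w : ↥c.supp => f w.1.1) := by
    intro c a b hab
    exact Subtype.ext (Subtype.ext (hf hab))
  choose bagc hcard hmemc hedgec hconnc using fun c : C =>
    exists_bags ((G.induce P).induce c.supp) (fun w => f w.1.1) (hfc c)
      (fun {u v x y} h1 h2 n1 n2 n3 n4 => hcomp c u v x y h1 h2 n1 n2 n3 n4)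
  set bag : Option (C × List Bool) → Set V := fun i =>
    match i with
    | none => Pᶜ
    | some (c, l) => Pᶜ ∪ (fun w : ↥c.supp => w.1.1) '' bagc c l
    with hbag
  have hmem : ∀ v : V, ∃ i, v ∈ bag i := by
    intro v
    by_cases hv : v ∈ P
    · set v' : ↥P := ⟨v, hv⟩
      set c : C := (G.induce P).connectedComponentMk v' with hcdef
      have hv'' : v' ∈ c.supp := by rw [ConnectedComponent.mem_supp_iff]
      obtain ⟨l, hl⟩ := hmemc c ⟨v', hv''⟩
      exact ⟨some (c, l), Or.inr ⟨⟨v', hv''⟩, hl, rfl⟩⟩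
    · exact ⟨none, hv⟩
  have hedge : ∀ u v : V, G.Adj u v → ∃ i, u ∈ bag i ∧ v ∈ bag i := by
    intro u v hadj
    by_cases hu : u ∈ P
    · by_cases hv : v ∈ P
      · set u' : ↥P := ⟨u, hu⟩
        set v' : ↥P := ⟨v, hv⟩
        have hadjP : (G.induce P).Adj u' v' := by
          simp only [comap_adj, Function.Embedding.coe_subtype]
          exact hadj
        set c : C := (G.induce P).connectedComponentMk u' with hcdef
        have hu'' : u' ∈ c.supp := by rw [ConnectedComponent.mem_supp_iff]
        have hv'' : v' ∈ c.supp := by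
          rw [ConnectedComponent.mem_supp_iff]
          exact (ConnectedComponent.sound hadjP.symm.reachable)
        have hadj2 : ((G.induce P).induce c.supp).Adj ⟨u', hu''⟩ ⟨v', hv''⟩ := by
          simp only [comap_adj, Function.Embedding.coe_subtype]
          exact hadjP
        obtain ⟨l, h1, h2⟩ := hedgec c _ _ hadj2
        exact ⟨some (c, l), Or.inr ⟨_, h1, rfl⟩, Or.inr ⟨_, h2, rfl⟩⟩
      · obtain ⟨i, hi⟩ := hmem u
        refine ⟨i, hi, ?_⟩
        match i with
        | none => exact hv
        | some (c, l) => exact Or.inl hv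
    · obtain ⟨i, hi⟩ := hmem v
      refine ⟨i, ?_, hi⟩
      match i with
      | none => exact hu
      | some (c, l) => exact Or.inl hu
  have hconn : ∀ v : V,
      ((ptGraph (@glueParent C)).induce {i | v ∈ bag i}).Connected := by
    intro v
    by_cases hv : v ∈ P
    · set v' : ↥P := ⟨v, hv⟩
      set c₀ : C := (G.induce P).connectedComponentMk v' with hc0def
      have hv'' : v' ∈ c₀.supp := by rw [ConnectedComponent.mem_supp_iff]
      set w0 : ↥c₀.supp := ⟨v', hv''⟩
      have hset : {i | v ∈ bag i} =
          (fun l => (some (c₀, l) : Option (C × List Bool))) '' {l | w0 ∈ bagc c₀ l} := by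
        ext i
        constructor
        · intro hi
          match i with
          | none => exact absurd hv hi
          | some (c, l) =>
            rcases hi with hi | ⟨w, hwbag, hwv⟩
            · exact absurd hv hi
            · have hw1 : w.1 = v' := Subtype.ext hwv
              have hcc : c = c₀ := by
                have := w.2
                rw [ConnectedComponent.mem_supp_iff] at this
                rw [← this, hw1]
              subst hcc
              have hww : w = w0 := Subtype.ext hw1
              subst hww
              exact ⟨l, hwbag, rfl⟩
        · rintro ⟨l, hl, rfl⟩
          exact Or.inr ⟨w0, hl, rfl⟩
      rw [hset]
      have hc := hconnc c₀ w0
      set φ : ((ptGraph (fun t : List Bool => t.tail)).induce {l | w0 ∈ bagc c₀ l}) →g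
          ((ptGraph (@glueParent C)).induce
            ((fun l => (some (c₀, l) : Option (C × List Bool))) '' {l | w0 ∈ bagc c₀ l})) :=
        ⟨fun x => ⟨some (c₀, x.1), ⟨x.1, x.2, rfl⟩⟩, by
          intro a b hab
          exact (glue_adj_some c₀ a.1 b.1).mpr hab⟩
      have hsurj : Function.Surjective φ := by
        rintro ⟨i, l, hl, rfl⟩
        exact ⟨⟨l, hl⟩, rfl⟩
      exact Connected.map φ hsurj hc
    · have hset : {i | v ∈ bag i} = Set.univ := by
        ext i
        simp only [Set.mem_univ, iff_true, Set.mem_setOf_eq]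
        match i with
        | none => exact hv
        | some (c, l) => exact Or.inl hv
      rw [hset]
      have htree := (glue_isTree (α := C)).isConnected
      exact Connected.map (induceUnivIso (ptGraph (@glueParent C))).symm.toHom
        (induceUnivIso (ptGraph (@glueParent C))).symm.surjective htree
  refine ⟨⟨Option (C × List Bool), ptGraph glueParent, glue_isTree, bag,
    hmem, fun u v h => hedge u v h, hconn⟩, ?_⟩
  intro i
  rw [Nat.card_coe_set_eq]
  match i with
  | none =>
    simp only [hbag]
    omega
  | some (c, l) =>
    refine le_trans (Set.ncard_union_le _ _) ?_
    have h1 : ((fun w : ↥c.supp => w.1.1) '' bagc c l).ncard ≤ (bagc c l).ncard :=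
      Set.ncard_image_le (Set.toFinite _)
    have h2 := hcard c l
    omega


def RAp (b1 b2 km kp om op z : ℕ) : Prop :=
  (z ≠ km ∧ z ≠ kp ∧ z ≠ om ∧ z ≠ op) ∧
  ((min km om < z ∧ z < max km om) ↔ b2 < om) ∧
  ((min kp op < z ∧ z < max kp op) ↔ op < b1)

lemma arith_keys {b1 b2 km kp om op z w : ℕ}
    (h0 : b1 < b2) (hkm : b1 < km ∧ km < b2) (hkp : b1 < kp ∧ kp < b2)
    (hom : om < b1 ∨ b2 < om) (hop : op < b1 ∨ b2 < op)
    (hz : b1 < z ∧ z < b2) (hw : w < b1 ∨ b2 < w)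
    (hzlo : km ≤ z) (hzhi : z ≤ kp)
    (hne : z ≠ km ∧ z ≠ kp ∧ z ≠ om ∧ z ≠ op ∧ w ≠ km ∧ w ≠ kp ∧ w ≠ om ∧ w ≠ op)
    (hnc1 : ¬ IL z w km om) (hnc2 : ¬ IL z w kp op) :
    RAp b1 b2 km kp om op z ∧ RAp b1 b2 km kp om op w := by
  simp only [RAp, IL, StrictBtw, Xor', Xor, not_or, not_and] at *
  omega

lemma arith_bval {b1 b2 km kp om op z w : ℕ}
    (h0 : b1 < b2) (hkm : b1 < km ∧ km < b2) (hkp : b1 < kp ∧ kp < b2)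
    (hom : om < b1 ∨ b2 < om) (hop : op < b1 ∨ b2 < op) (hkmkp : km ≤ kp)
    (hfr : ¬ IL km om kp op ∨ km = kp ∨ km = op ∨ om = kp ∨ om = op)
    (hx1 : IL km om z w) (hx2 : IL kp op z w) :
    ¬ RAp b1 b2 km kp om op z ∧ ¬ RAp b1 b2 km kp om op w := by
  simp only [RAp, IL, StrictBtw, Xor', Xor, not_or, not_and] at *
  omega

lemma arith_claim {b1 b2 km kp om op z w : ℕ}
    (hz : RAp b1 b2 km kp om op z) (hwn : ¬ RAp b1 b2 km kp om op w)
    (hwne : w ≠ km ∧ w ≠ kp ∧ w ≠ om ∧ w ≠ op) :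
    IL km om z w ∨ IL kp op z w := by
  simp only [RAp, IL, StrictBtw, Xor', Xor, not_or, not_and] at *
  omega

lemma cross_key {V : Type} (f : V → ℕ) (hf : Function.Injective f)
    {a b0 : Sym2 V} {x0 y0 : V} (hb0 : b0 = s(x0, y0)) (hcr : EdgesCross f a b0) :
    ∃ u v, a = s(u, v) ∧
      (f x0 < f u ∧ f u < f y0 ∧ (f v < f x0 ∨ f y0 < f v) ∨
       f y0 < f u ∧ f u < f x0 ∧ (f v < f y0 ∨ f x0 < f v)) ∧
      u ≠ x0 ∧ u ≠ y0 ∧ v ≠ x0 ∧ v ≠ y0 := by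
  obtain ⟨u, v, x, y, hae, hbe, d1, d2, d3, d4, hil⟩ := hcr
  rw [hb0, Sym2.eq_iff] at hbe
  rw [chordsCross_eq_IL] at hil
  have hils : IL (f u) (f v) (f x0) (f y0) ∧ u ≠ x0 ∧ u ≠ y0 ∧ v ≠ x0 ∧ v ≠ y0 := by
    rcases hbe with ⟨rfl, rfl⟩ | ⟨rfl, rfl⟩
    · exact ⟨hil, d1, d2, d3, d4⟩
    · exact ⟨IL_swap_right.mp hil, d2, d1, d4, d3⟩
  obtain ⟨hil', e1, e2, e3, e4⟩ := hils
  have hne1 : f u ≠ f x0 := fun hc => e1 (hf hc)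
  have hne2 : f u ≠ f y0 := fun hc => e2 (hf hc)
  have hne3 : f v ≠ f x0 := fun hc => e3 (hf hc)
  have hne4 : f v ≠ f y0 := fun hc => e4 (hf hc)
  have hvals : (f x0 < f u ∧ f u < f y0 ∧ (f v < f x0 ∨ f y0 < f v) ∨
       f y0 < f u ∧ f u < f x0 ∧ (f v < f y0 ∨ f x0 < f v)) ∨
      (f x0 < f v ∧ f v < f y0 ∧ (f u < f x0 ∨ f y0 < f u) ∨
       f y0 < f v ∧ f v < f x0 ∧ (f u < f y0 ∨ f x0 < f u)) := by
    simp only [IL, StrictBtw, Xor', Xor] at hil'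
    omega
  rcases hvals with h | h
  · exact ⟨u, v, hae, h, e1, e2, e3, e4⟩
  · exact ⟨v, u, hae.trans (Sym2.eq_swap), h, e3, e4, e1, e2⟩

set_option maxHeartbeats 2000000 in
lemma separation {V : Type} [Fintype V] (G : SimpleGraph V) (f : V → ℕ)
    (hf : Function.Injective f) (A B : Set (Sym2 V))
    (hAE : A ⊆ G.edgeSet) (hBE : B ⊆ G.edgeSet)
    (hAnc : ∀ e ∈ A, ∀ e' ∈ A, ¬ EdgesCross f e e')
    (hX : ∀ e ∈ A, ∀ e' ∈ B, EdgesCross f e e')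
    (hcov : ∀ e ∈ G.edgeSet, ∀ e' ∈ G.edgeSet, EdgesCross f e e' →
      (e ∈ A ∧ e' ∈ B) ∨ (e' ∈ A ∧ e ∈ B)) :
    ∃ F : Finset (Sym2 V), F.card ≤ 4 ∧ (↑F : Set (Sym2 V)) ⊆ G.edgeSet ∧
      ({v : V | ∀ e ∈ F, v ∉ e}ᶜ).ncard ≤ 8 ∧
      ∀ u v x y : ↥{v : V | ∀ e ∈ F, v ∉ e},
        (G.induce {v : V | ∀ e ∈ F, v ∉ e}).Adj u v →
        (G.induce {v : V | ∀ e ∈ F, v ∉ e}).Adj x y →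
        (G.induce {v : V | ∀ e ∈ F, v ∉ e}).Reachable u x →
        ¬ EdgesCross f s(u.1, v.1) s(x.1, y.1) := by
  classical
  by_cases hAB : A.Nonempty ∧ B.Nonempty
  swap
  · refine ⟨∅, by simp, by simp, ?_, ?_⟩
    · have : ({v : V | ∀ e ∈ (∅ : Finset (Sym2 V)), v ∉ e}ᶜ) = ∅ := by
        ext v; simp
      rw [this]; simp
    · intro u v x y hadj1 hadj2 _ hcross
      have h1 : G.Adj u.1 v.1 := hadj1
      have h2 : G.Adj x.1 y.1 := hadj2
      rcases hcov _ h1 _ h2 hcross with ⟨hA, hB⟩ | ⟨hA, hB⟩ <;>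
        exact hAB ⟨⟨_, hA⟩, ⟨_, hB⟩⟩
  obtain ⟨⟨a0, ha0⟩, ⟨b0, hb0⟩⟩ := hAB
  obtain ⟨⟨x1, y1⟩, hrep⟩ := Quot.exists_rep b0
  have hb0eq' : b0 = s(x1, y1) := hrep.symm
  have hxy1 : x1 ≠ y1 := by
    have := hBE hb0
    rw [hb0eq', SimpleGraph.mem_edgeSet] at this
    exact this.ne
  obtain ⟨x0, y0, hb0eq, hx0y0⟩ : ∃ x0 y0, b0 = s(x0, y0) ∧ f x0 < f y0 := by
    rcases lt_or_gt_of_ne (fun hc => hxy1 (hf hc) : f x1 ≠ f y1) with h | h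
    · exact ⟨x1, y1, hb0eq', h⟩
    · exact ⟨y1, x1, hb0eq'.trans Sym2.eq_swap, h⟩
  -- key specification for edges of A
  have akeyspec : ∀ a ∈ A, ∃ u v, a = s(u, v) ∧
      f x0 < f u ∧ f u < f y0 ∧ (f v < f x0 ∨ f y0 < f v) ∧
      u ≠ x0 ∧ u ≠ y0 ∧ v ≠ x0 ∧ v ≠ y0 := by
    intro a ha
    obtain ⟨u, v, hae, hvals, e1, e2, e3, e4⟩ := cross_key f hf hb0eq (hX a ha b0 hb0)
    rcases hvals with h | h
    · exact ⟨u, v, hae, h.1, h.2.1, h.2.2, e1, e2, e3, e4⟩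
    · omega
  set KS : Set ℕ := {z | ∃ u v, s(u, v) ∈ A ∧ f u = z ∧
      f x0 < z ∧ z < f y0 ∧ (f v < f x0 ∨ f y0 < f v)} with hKS
  have hKSne : KS.Nonempty := by
    obtain ⟨u, v, hae, h1, h2, h3, _⟩ := akeyspec a0 ha0
    exact ⟨f u, u, v, hae ▸ ha0, rfl, h1, h2, h3⟩
  have hKSbdd : BddAbove KS := ⟨f y0, fun z hz => by
    obtain ⟨u, v, _, rfl, _, h, _⟩ := hz; exact h.le⟩
  obtain ⟨um, vm, hAm, hfum, hkm1, hkm2, hkm3⟩ := Nat.sInf_mem hKSne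
  obtain ⟨up, vp, hAp, hfup, hkp1, hkp2, hkp3⟩ := Nat.sSup_mem hKSne hKSbdd
  set km := sInf KS with hkmdef
  set kp := sSup KS with hkpdef
  set om := f vm with homdef
  set op := f vp with hopdef
  set F : Finset (Sym2 V) := {s(um, vm), s(up, vp)} with hF
  set P : Set V := {v : V | ∀ e ∈ F, v ∉ e} with hP
  have hmemF1 : s(um, vm) ∈ F := by simp [hF]
  have hmemF2 : s(up, vp) ∈ F := by simp [hF]
  -- survival facts
  have hsurv : ∀ w : V, w ∈ P →
      w ≠ um ∧ w ≠ vm ∧ w ≠ up ∧ w ≠ vp ∧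
      f w ≠ km ∧ f w ≠ om ∧ f w ≠ kp ∧ f w ≠ op := by
    intro w hw
    have h1 := hw _ hmemF1
    have h2 := hw _ hmemF2
    rw [Sym2.mem_iff] at h1 h2
    push_neg at h1 h2
    refine ⟨h1.1, h1.2, h2.1, h2.2, ?_, ?_, ?_, ?_⟩
    · intro hc; exact h1.1 (hf (hc.trans hfum.symm))
    · intro hc; exact h1.2 (hf hc)
    · intro hc; exact h2.1 (hf (hc.trans hfup.symm))
    · intro hc; exact h2.2 (hf hc)
  have humvm : um ≠ vm := by
    have := hAE hAm; rw [SimpleGraph.mem_edgeSet] at this; exact this.ne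
  have hupvp : up ≠ vp := by
    have := hAE hAp; rw [SimpleGraph.mem_edgeSet] at this; exact this.ne
  have hkmle : km ≤ kp := by
    have h1 : km ≤ f um := hfum ▸ le_rfl
    have h2 : f um ∈ KS := ⟨um, vm, hAm, rfl, by omega, by omega, hkm3⟩
    have := le_csSup hKSbdd h2
    omega
  have hfr : ¬ IL km om kp op ∨ km = kp ∨ km = op ∨ om = kp ∨ om = op := by
    by_cases h1 : km = kp
    · exact Or.inr (Or.inl h1)
    by_cases h2 : km = op
    · exact Or.inr (Or.inr (Or.inl h2))
    by_cases h3 : om = kp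
    · exact Or.inr (Or.inr (Or.inr (Or.inl h3)))
    by_cases h4 : om = op
    · exact Or.inr (Or.inr (Or.inr (Or.inr h4)))
    refine Or.inl ?_
    intro hil
    have hcr : EdgesCross f s(um, vm) s(up, vp) := by
      refine ec_intro f ?_ ?_ ?_ ?_ ?_
      · intro hc; apply h1
        have := congrArg f hc; rwa [hfum, hfup] at this
      · intro hc; apply h2
        have := congrArg f hc; rwa [hfum] at this
      · intro hc; apply h3
        have := congrArg f hc; rwa [hfup] at this
      · intro hc; exact h4 (congrArg f hc)
      · rw [hfum, hfup]; exact hil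
    exact hAnc _ hAm _ hAp hcr
  -- positions of frame values
  have hkmpos : f x0 < km ∧ km < f y0 := ⟨hkm1, hkm2⟩
  have hkppos : f x0 < kp ∧ kp < f y0 := ⟨hkp1, hkp2⟩
  -- KEYS
  have hKEYS : ∀ p q : V, s(p, q) ∈ A → p ∈ P → q ∈ P →
      f x0 < f p → f p < f y0 → (f q < f x0 ∨ f y0 < f q) →
      RAp (f x0) (f y0) km kp om op (f p) ∧ RAp (f x0) (f y0) km kp om op (f q) := by
    intro p q hApq hpP hqP hp1 hp2 hq
    obtain ⟨hp1', hp2', hp3', hp4', hp5', hp6', hp7', hp8'⟩ := hsurv p hpP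
    obtain ⟨hq1', hq2', hq3', hq4', hq5', hq6', hq7', hq8'⟩ := hsurv q hqP
    have hzlo : km ≤ f p := Nat.sInf_le ⟨p, q, hApq, rfl, hp1, hp2, hq⟩
    have hzhi : f p ≤ kp := le_csSup hKSbdd ⟨p, q, hApq, rfl, hp1, hp2, hq⟩
    have hnc1 : ¬ IL (f p) (f q) km om := by
      intro hil
      have hcr : EdgesCross f s(p, q) s(um, vm) := by
        refine ec_intro f hp1' hp2' hq1' hq2' ?_
        rw [hfum]; exact hil
      exact hAnc _ hApq _ hAm hcr
    have hnc2 : ¬ IL (f p) (f q) kp op := by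
      intro hil
      have hcr : EdgesCross f s(p, q) s(up, vp) := by
        refine ec_intro f hp3' hp4' hq3' hq4' ?_
        rw [hfup]; exact hil
      exact hAnc _ hApq _ hAp hcr
    exact arith_keys hx0y0 hkmpos hkppos hkm3 hkp3 ⟨hp1, hp2⟩ hq hzlo hzhi
      ⟨hp5', hp7', hp6', hp8', hq5', hq7', hq6', hq8'⟩ hnc1 hnc2
  -- BVAL
  have hBVAL : ∀ p q : V, s(p, q) ∈ B →
      ¬ RAp (f x0) (f y0) km kp om op (f p) ∧
      ¬ RAp (f x0) (f y0) km kp om op (f q) := by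
    intro p q hBpq
    have hc1 := hX _ hAm _ hBpq
    have hc2 := hX _ hAp _ hBpq
    obtain ⟨_, _, _, _, hil1⟩ := ec_vals f hc1
    obtain ⟨_, _, _, _, hil2⟩ := ec_vals f hc2
    rw [hfum] at hil1
    rw [hfup] at hil2
    exact arith_bval hx0y0 hkmpos hkppos hkm3 hkp3 hkmle hfr hil1 hil2
  -- invariance along edges
  have hCLAIM : ∀ p q : V, G.Adj p q → p ∈ P → q ∈ P →
      RAp (f x0) (f y0) km kp om op (f p) → RAp (f x0) (f y0) km kp om op (f q) := by
    intro p q hadj hpP hqP hRAp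
    by_contra hq
    obtain ⟨hp1', hp2', hp3', hp4', hp5', hp6', hp7', hp8'⟩ := hsurv p hpP
    obtain ⟨hq1', hq2', hq3', hq4', hq5', hq6', hq7', hq8'⟩ := hsurv q hqP
    have hcases := arith_claim hRAp hq ⟨hq5', hq7', hq6', hq8'⟩
    have hEpq : s(p, q) ∈ G.edgeSet := by rw [SimpleGraph.mem_edgeSet]; exact hadj
    rcases hcases with hil | hil
    · have hcr : EdgesCross f s(um, vm) s(p, q) := by
        refine ec_intro f ?_ ?_ ?_ ?_ ?_
        · exact fun hc => hp1' hc.symm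
        · exact fun hc => hq1' hc.symm
        · exact fun hc => hp2' hc.symm
        · exact fun hc => hq2' hc.symm
        · rw [hfum]; exact hil
      rcases hcov _ (hAE hAm) _ hEpq hcr with ⟨_, hB2⟩ | ⟨hA2, hB2⟩
      · exact (hBVAL p q hB2).1 hRAp
      · exact not_edgesCross_self f _ (hX _ hAm _ hB2)
    · have hcr : EdgesCross f s(up, vp) s(p, q) := by
        refine ec_intro f ?_ ?_ ?_ ?_ ?_
        · exact fun hc => hp3' hc.symm
        · exact fun hc => hq3' hc.symm
        · exact fun hc => hp4' hc.symm
        · exact fun hc => hq4' hc.symm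
        · rw [hfup]; exact hil
      rcases hcov _ (hAE hAp) _ hEpq hcr with ⟨_, hB2⟩ | ⟨hA2, hB2⟩
      · exact (hBVAL p q hB2).1 hRAp
      · exact not_edgesCross_self f _ (hX _ hAp _ hB2)
  have hwalk : ∀ p q : ↥P, (G.induce P).Reachable p q →
      (RAp (f x0) (f y0) km kp om op (f p.1) ↔ RAp (f x0) (f y0) km kp om op (f q.1)) := by
    intro p q hpq
    obtain ⟨w⟩ := hpq
    induction w with
    | nil => exact Iff.rfl
    | @cons a b c h w ih =>
      have hadj : G.Adj a.1 b.1 := h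
      exact ⟨fun hr => ih.mp (hCLAIM a.1 b.1 hadj a.2 b.2 hr),
        fun hr => (hCLAIM b.1 a.1 hadj.symm b.2 a.2 (ih.mpr hr))⟩
  refine ⟨F, ?_, ?_, ?_, ?_⟩
  · have := Finset.card_insert_le s(um, vm) ({s(up, vp)} : Finset (Sym2 V))
    simp [hF] at this ⊢
    omega
  · intro e he
    simp [hF] at he
    rcases he with rfl | rfl
    exacts [hAE hAm, hAE hAp]
  · have hsub : Pᶜ ⊆ {um, vm, up, vp} := by
      intro w hw
      simp only [hP, Set.mem_compl_iff, Set.mem_setOf_eq, not_forall] at hw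
      obtain ⟨e, heF, hwe⟩ := hw
      simp only [not_not] at hwe
      simp only [hF, Finset.mem_insert, Finset.mem_singleton] at heF
      rcases heF with rfl | rfl <;> rw [Sym2.mem_iff] at hwe <;>
        rcases hwe with rfl | rfl <;> simp
    refine le_trans (Set.ncard_le_ncard hsub (Set.toFinite _)) ?_
    have h4 : ({up, vp} : Set V).ncard ≤ 2 :=
      le_trans (Set.ncard_insert_le _ _) (by simp)
    have h3 : ({vm, up, vp} : Set V).ncard ≤ 3 :=
      le_trans (Set.ncard_insert_le _ _) (by omega)
    exact le_trans (Set.ncard_insert_le _ _) (by omega)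
  · intro u v x y hadj1 hadj2 hreach hcross
    have hGuv : G.Adj u.1 v.1 := hadj1
    have hGxy : G.Adj x.1 y.1 := hadj2
    have hEuv : s(u.1, v.1) ∈ G.edgeSet := hGuv
    have hExy : s(x.1, y.1) ∈ G.edgeSet := hGxy
    rcases hcov _ hEuv _ hExy hcross with ⟨hA2, hB2⟩ | ⟨hA2, hB2⟩
    · -- s(u,v) ∈ A, s(x,y) ∈ B
      obtain ⟨p, q, heq, hp1, hp2, hq3, _, _, _, _⟩ := akeyspec _ hA2
      have hpq : (p = u.1 ∧ q = v.1) ∨ (p = v.1 ∧ q = u.1) := by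
        rw [Sym2.eq_iff] at heq
        rcases heq with ⟨h1, h2⟩ | ⟨h1, h2⟩
        · exact Or.inl ⟨h1.symm, h2.symm⟩
        · exact Or.inr ⟨h2.symm, h1.symm⟩
      have hA3 : s(p, q) ∈ A := by rw [← heq]; exact hA2
      have hRAu : RAp (f x0) (f y0) km kp om op (f u.1) := by
        rcases hpq with ⟨rfl, rfl⟩ | ⟨rfl, rfl⟩
        · exact (hKEYS _ _ hA3 u.2 v.2 hp1 hp2 hq3).1
        · exact (hKEYS _ _ hA3 v.2 u.2 hp1 hp2 hq3).2
      have hRAx := (hwalk u x hreach).mp hRAu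
      exact (hBVAL x.1 y.1 hB2).1 hRAx
    · -- s(x,y) ∈ A, s(u,v) ∈ B
      obtain ⟨p, q, heq, hp1, hp2, hq3, _, _, _, _⟩ := akeyspec _ hA2
      have hpq : (p = x.1 ∧ q = y.1) ∨ (p = y.1 ∧ q = x.1) := by
        rw [Sym2.eq_iff] at heq
        rcases heq with ⟨h1, h2⟩ | ⟨h1, h2⟩
        · exact Or.inl ⟨h1.symm, h2.symm⟩
        · exact Or.inr ⟨h2.symm, h1.symm⟩
      have hA3 : s(p, q) ∈ A := by rw [← heq]; exact hA2
      have hRAx : RAp (f x0) (f y0) km kp om op (f x.1) := by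
        rcases hpq with ⟨rfl, rfl⟩ | ⟨rfl, rfl⟩
        · exact (hKEYS _ _ hA3 x.2 y.2 hp1 hp2 hq3).1
        · exact (hKEYS _ _ hA3 y.2 x.2 hp1 hp2 hq3).2
      have hRAu := (hwalk u x hreach).mpr hRAx
      exact (hBVAL u.1 v.1 hB2).1 hRAu

/-- If `G` admits a circular layout with at most one bundled crossing, then removing the
(at most 8) endpoints of the at most 4 frame edges leaves a graph all of whose connected
components are outerplanar; consequently `G` has treewidth at most 10. -/
theorem one_bundled_crossing_structure {V : Type} [Fintype V] (G : SimpleGraph V)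
    (h : CircBundledLE G 1) :
    (∃ F : Finset (Sym2 V), F.card ≤ 4 ∧ (↑F : Set (Sym2 V)) ⊆ G.edgeSet ∧
      ∀ c : (G.induce {v : V | ∀ e ∈ F, v ∉ e}).ConnectedComponent,
        Outerplanar ((G.induce {v : V | ∀ e ∈ F, v ∉ e}).induce c.supp)) ∧
    TreewidthLE G 10 := by
  classical
  obtain ⟨f, hf, bundles, hsub, hAnc, hBnc, hX, hcov⟩ := h
  set A := (bundles 0).1 with hA
  set B := (bundles 0).2 with hB
  have hAE : A ⊆ G.edgeSet := (hsub 0).1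
  have hBE : B ⊆ G.edgeSet := (hsub 0).2
  have hcov' : ∀ e ∈ G.edgeSet, ∀ e' ∈ G.edgeSet, EdgesCross f e e' →
      (e ∈ A ∧ e' ∈ B) ∨ (e' ∈ A ∧ e ∈ B) := by
    intro e he e' he' hcr
    obtain ⟨i, hi⟩ := hcov e he e' he' hcr
    have hi0 : i = 0 := Subsingleton.elim i 0
    rw [hi0] at hi
    exact hi
  obtain ⟨F, hFcard, hFE, hPc, hsep⟩ :=
    separation G f hf A B hAE hBE (hAnc 0) (hX 0) hcov'
  have hOP : ∀ c : (G.induce {v : V | ∀ e ∈ F, v ∉ e}).ConnectedComponent,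
      ∀ u v x y : ↥c.supp,
        ((G.induce {v : V | ∀ e ∈ F, v ∉ e}).induce c.supp).Adj u v →
        ((G.induce {v : V | ∀ e ∈ F, v ∉ e}).induce c.supp).Adj x y →
        u ≠ x → u ≠ y → v ≠ x → v ≠ y →
        ¬ IL (f u.1.1) (f v.1.1) (f x.1.1) (f y.1.1) := by
    intro c u v x y h1 h2 n1 n2 n3 n4 hil
    have hadj1 : (G.induce {v : V | ∀ e ∈ F, v ∉ e}).Adj u.1 v.1 := h1
    have hadj2 : (G.induce {v : V | ∀ e ∈ F, v ∉ e}).Adj x.1 y.1 := h2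
    have hreach : (G.induce {v : V | ∀ e ∈ F, v ∉ e}).Reachable u.1 x.1 := by
      have hu := u.2
      have hx := x.2
      rw [ConnectedComponent.mem_supp_iff] at hu hx
      exact ConnectedComponent.exact (hu.trans hx.symm)
    refine hsep u.1 v.1 x.1 y.1 hadj1 hadj2 hreach ?_
    refine ec_intro f ?_ ?_ ?_ ?_ hil
    · exact fun hc => n1 (Subtype.ext (Subtype.ext hc))
    · exact fun hc => n2 (Subtype.ext (Subtype.ext hc))
    · exact fun hc => n3 (Subtype.ext (Subtype.ext hc))
    · exact fun hc => n4 (Subtype.ext (Subtype.ext hc))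
  constructor
  · refine ⟨F, hFcard, hFE, ?_⟩
    intro c
    refine ⟨fun w => f w.1.1, ?_, ?_⟩
    · intro a b hab
      exact Subtype.ext (Subtype.ext (hf hab))
    · intro e he e' he' hcr
      obtain ⟨u, v, x, y, rfl, rfl, d1, d2, d3, d4, hcc⟩ := hcr
      rw [SimpleGraph.mem_edgeSet] at he he'
      exact hOP c u v x y he he' d1 d2 d3 d4 hcc
  · exact tw_glue G {v : V | ∀ e ∈ F, v ∉ e} f hf hPc hOP
end

section
/- If a graph G has a circular layout with exactly one bundled crossing (so that all crossings can be grouped into a single bundled crossing), then G is planar. -/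
open SimpleGraph

/-- A crossing-free drawing of `G` in the plane: vertices are distinct points, edges are
arcs (paths) between their endpoints, arcs are injective, avoid other vertices, and two
arcs of distinct edges meet only at shared endpoints. -/
structure PlaneEmbedding {V : Type} (G : SimpleGraph V) where
  pos : V → ℝ × ℝ
  pos_inj : Function.Injective pos
  arc : ∀ ⦃u v : V⦄, G.Adj u v → Path (pos u) (pos v)
  arc_symm : ∀ ⦃u v : V⦄ (h : G.Adj u v), arc h.symm = (arc h).symm
  arc_inj : ∀ ⦃u v : V⦄ (h : G.Adj u v), Function.Injective (arc h)
  arc_avoid : ∀ ⦃u v : V⦄ (h : G.Adj u v) (w : V),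
    pos w ∈ Set.range (arc h) → w = u ∨ w = v
  arcs_meet : ∀ ⦃u v x y : V⦄ (h : G.Adj u v) (h' : G.Adj x y),
    s(u, v) ≠ s(x, y) → ∀ p : ℝ × ℝ,
      p ∈ Set.range (arc h) → p ∈ Set.range (arc h') → p = pos u ∨ p = pos v

def IsPlanar {V : Type} (G : SimpleGraph V) : Prop := Nonempty (PlaneEmbedding G)

noncomputable def semiArc (a b ε : ℝ) (t : ℝ) : ℝ × ℝ :=
  ((a + b) / 2 - (b - a) / 2 * Real.cos (Real.pi * t),
    ε * |(b - a) / 2| * Real.sin (Real.pi * t))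

noncomputable def semiPath (a b ε : ℝ) : Path ((a, 0) : ℝ × ℝ) ((b, 0) : ℝ × ℝ) where
  toFun := fun t => semiArc a b ε ↑t
  continuous_toFun := by unfold semiArc; fun_prop
  source' := by
    simp [semiArc]
    ring
  target' := by
    simp [semiArc, Real.cos_pi, Real.sin_pi]
    ring
  
@[simp] lemma semiPath_apply (a b ε : ℝ) (t : unitInterval) :
    semiPath a b ε t = semiArc a b ε ↑t := rfl

lemma semiPath_symm (a b ε : ℝ) : (semiPath a b ε).symm = semiPath b a ε := by
  apply Path.ext
  funext t
  have hco : ((unitInterval.symm t : unitInterval) : ℝ) = 1 - ↑t := by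
    simp [unitInterval.symm]
  simp only [Path.symm_apply, Function.comp_apply, semiPath_apply, hco, semiArc]
  have h1 : Real.pi * (1 - ↑t) = Real.pi - Real.pi * ↑t := by ring
  rw [h1, Real.cos_pi_sub, Real.sin_pi_sub]
  have h2 : |(a - b) / 2| = |(b - a) / 2| := by
    rw [show (a - b)/2 = -((b - a)/2) by ring, abs_neg]
  rw [Prod.ext_iff]
  constructor
  · simp; ring
  · simp [h2]

lemma semiPath_range {a b ε : ℝ} (hε : ε = 1 ∨ ε = -1) {p : ℝ × ℝ}
    (hp : p ∈ Set.range ⇑(semiPath a b ε)) :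
    (p.1 - (a + b) / 2) ^ 2 + p.2 ^ 2 = ((b - a) / 2) ^ 2 ∧ 0 ≤ ε * p.2 := by
  obtain ⟨t, rfl⟩ := hp
  have hε2 : ε ^ 2 = 1 := by rcases hε with h | h <;> rw [h] <;> norm_num
  have ht0 : (0:ℝ) ≤ ↑t := t.2.1
  have ht1 : (↑t:ℝ) ≤ 1 := t.2.2
  have hsc := Real.sin_sq_add_cos_sq (Real.pi * ↑t)
  have hsin : 0 ≤ Real.sin (Real.pi * ↑t) :=
    Real.sin_nonneg_of_nonneg_of_le_pi (by positivity)
      (by nlinarith [Real.pi_pos])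
  constructor
  · simp only [semiPath_apply, semiArc]
    have habs : |(b - a) / 2| ^ 2 = ((b - a) / 2) ^ 2 := sq_abs _
    linear_combination ((b - a) / 2) ^ 2 * hsc +
      |(b - a) / 2| ^ 2 * Real.sin (Real.pi * ↑t) ^ 2 * hε2 +
      Real.sin (Real.pi * ↑t) ^ 2 * habs
  · simp only [semiPath_apply, semiArc]
    have : ε * (ε * |(b - a) / 2| * Real.sin (Real.pi * ↑t))
        = |(b - a) / 2| * Real.sin (Real.pi * ↑t) := by
      rw [show ε * (ε * |(b - a) / 2| * Real.sin (Real.pi * ↑t))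
        = ε ^ 2 * (|(b - a) / 2| * Real.sin (Real.pi * ↑t)) by ring, hε2, one_mul]
    rw [this]
    exact mul_nonneg (abs_nonneg _) hsin

lemma semiPath_injective {a b ε : ℝ} (hab : a ≠ b) :
    Function.Injective ⇑(semiPath a b ε) := by
  intro s t hst
  have h1 := congrArg Prod.fst hst
  simp only [semiPath_apply, semiArc] at h1
  have hr : (b - a) / 2 ≠ 0 := by
    intro h; apply hab; linarith [sub_eq_zero.1 (by linarith : b - a = 0)]
  have hc : Real.cos (Real.pi * ↑s) = Real.cos (Real.pi * ↑t) := by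
    field_simp at h1
    have h2 : (b - a) * (Real.cos (Real.pi * ↑s) - Real.cos (Real.pi * ↑t)) = 0 := by
      linarith
    rcases mul_eq_zero.1 h2 with h | h
    · exact absurd (by linarith : b = a) (Ne.symm hab)
    · linarith
  have hπ := Real.pi_pos
  have hs : Real.pi * (s:ℝ) ∈ Set.Icc 0 Real.pi :=
    ⟨mul_nonneg hπ.le s.2.1, by nlinarith [s.2.2, s.2.1]⟩
  have ht : Real.pi * (t:ℝ) ∈ Set.Icc 0 Real.pi :=
    ⟨mul_nonneg hπ.le t.2.1, by nlinarith [t.2.2, t.2.1]⟩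
  have := Real.injOn_cos hs ht hc
  have : (s:ℝ) = (t:ℝ) := by
    have hpne : Real.pi ≠ 0 := ne_of_gt hπ
    exact mul_left_cancel₀ hpne this
  exact Subtype.ext this

lemma circle_y0 {a b p1 : ℝ} (E : (p1 - (a + b) / 2) ^ 2 + (0:ℝ) ^ 2 = ((b - a) / 2) ^ 2) :
    p1 = a ∨ p1 = b := by
  have h : (p1 - a) * (p1 - b) = 0 := by linear_combination E
  rcases mul_eq_zero.1 h with h | h
  · left; linarith [sub_eq_zero.1 h]
  · right; linarith [sub_eq_zero.1 h]

lemma tangent_core {m m' w p1 p2 : ℝ}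
    (E1 : (p1 - m) ^ 2 + p2 ^ 2 = (w - m) ^ 2)
    (E2 : (p1 - m') ^ 2 + p2 ^ 2 = (w - m') ^ 2)
    (hm : m ≠ m') : p2 = 0 := by
  have h : (m' - m) * (w - p1) = 0 := by linear_combination (E2 - E1) / 2
  rcases mul_eq_zero.1 h with h | h
  · exact absurd (by linarith [sub_eq_zero.1 h] : m = m') hm
  · have hw : w = p1 := by linarith [sub_eq_zero.1 h]
    have : p2 ^ 2 = 0 := by rw [hw] at E1; nlinarith [E1]
    exact pow_eq_zero_iff (by norm_num) |>.1 this

lemma disjoint_core {a b c d p1 p2 : ℝ} (hab : a < b) (hbc : b < c) (hcd : c < d)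
    (E1 : (p1 - (a + b) / 2) ^ 2 + p2 ^ 2 = ((b - a) / 2) ^ 2)
    (E2 : (p1 - (c + d) / 2) ^ 2 + p2 ^ 2 = ((d - c) / 2) ^ 2) : False := by
  have h1 : p1 ≤ b := by nlinarith [sq_nonneg p2, E1]
  have h2 : c ≤ p1 := by nlinarith [sq_nonneg p2, E2]
  linarith

lemma nested_core {a b c d p1 p2 : ℝ} (h1 : a < c) (h2 : c < d) (h3 : d < b)
    (E1 : (p1 - (a + b) / 2) ^ 2 + p2 ^ 2 = ((b - a) / 2) ^ 2)
    (E2 : (p1 - (c + d) / 2) ^ 2 + p2 ^ 2 = ((d - c) / 2) ^ 2) : False := by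
  have hc : c ≤ p1 := by nlinarith [sq_nonneg p2, E2]
  have hd : p1 ≤ d := by nlinarith [sq_nonneg p2, E2]
  -- (b - p1)(p1 - a) = p2^2 = (d - p1)(p1 - c)
  have key : (b - p1) * (p1 - a) = (d - p1) * (p1 - c) := by linear_combination E2 - E1
  nlinarith [mul_nonneg (by linarith : (0:ℝ) ≤ d - p1) (by linarith : (0:ℝ) ≤ p1 - c),
    mul_pos (by linarith : (0:ℝ) < b - p1) (by linarith : (0:ℝ) < p1 - a)]

lemma chords_sep {a b c d p1 p2 : ℝ} (hab : a < b) (hcd : c < d)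
    (h1 : a ≠ c) (h2 : a ≠ d) (h3 : b ≠ c) (h4 : b ≠ d)
    (hiff : (a < c ∧ c < b) ↔ (a < d ∧ d < b))
    (E1 : (p1 - (a + b) / 2) ^ 2 + p2 ^ 2 = ((b - a) / 2) ^ 2)
    (E2 : (p1 - (c + d) / 2) ^ 2 + p2 ^ 2 = ((d - c) / 2) ^ 2) : False := by
  by_cases hc : a < c ∧ c < b
  · have hd := hiff.1 hc
    exact nested_core hc.1 hcd hd.2 E1 E2
  · have hd : ¬ (a < d ∧ d < b) := fun h => hc (hiff.2 h)
    have hcout : c < a ∨ b < c := by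
      rcases lt_trichotomy c a with h | h | h
      · exact Or.inl h
      · exact absurd h.symm h1
      · rcases lt_trichotomy c b with h' | h' | h'
        · exact absurd ⟨h, h'⟩ hc
        · exact absurd h'.symm h3
        · exact Or.inr h'
    rcases hcout with hca | hbc
    · rcases lt_trichotomy d a with hda | hda | hda
      · exact disjoint_core hcd hda hab E2 E1
      · exact absurd hda.symm h2
      · rcases lt_trichotomy d b with hdb | hdb | hdb
        · exact absurd ⟨hda, hdb⟩ hd
        · exact absurd hdb h4.symm
        · exact nested_core hca hab hdb E2 E1
    · exact disjoint_core hab hbc hcd E1 E2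

lemma chords_sep' {a b c d p1 p2 : ℝ} (hab : a ≠ b) (hcd : c ≠ d)
    (h1 : a ≠ c) (h2 : a ≠ d) (h3 : b ≠ c) (h4 : b ≠ d)
    (hiff : (min a b < c ∧ c < max a b) ↔ (min a b < d ∧ d < max a b))
    (E1 : (p1 - (a + b) / 2) ^ 2 + p2 ^ 2 = ((b - a) / 2) ^ 2)
    (E2 : (p1 - (c + d) / 2) ^ 2 + p2 ^ 2 = ((d - c) / 2) ^ 2) : False := by
  have E1' : (p1 - (min a b + max a b) / 2) ^ 2 + p2 ^ 2 = ((max a b - min a b) / 2) ^ 2 := by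
    rcases le_total a b with h | h
    · rw [min_eq_left h, max_eq_right h]; exact E1
    · rw [min_eq_right h, max_eq_left h]; linear_combination E1
  have E2' : (p1 - (min c d + max c d) / 2) ^ 2 + p2 ^ 2 = ((max c d - min c d) / 2) ^ 2 := by
    rcases le_total c d with h | h
    · rw [min_eq_left h, max_eq_right h]; exact E2
    · rw [min_eq_right h, max_eq_left h]; linear_combination E2
  have hab' : min a b < max a b := by
    rcases hab.lt_or_gt with h | h
    · rw [min_eq_left h.le, max_eq_right h.le]; exact h
    · rw [min_eq_right h.le, max_eq_left h.le]; exact h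
  have hcd' : min c d < max c d := by
    rcases hcd.lt_or_gt with h | h
    · rw [min_eq_left h.le, max_eq_right h.le]; exact h
    · rw [min_eq_right h.le, max_eq_left h.le]; exact h
  have hiff' : (min a b < min c d ∧ min c d < max a b) ↔
      (min a b < max c d ∧ max c d < max a b) := by
    rcases le_total c d with h | h
    · rw [min_eq_left h, max_eq_right h]; exact hiff
    · rw [min_eq_right h, max_eq_left h]; exact hiff.symm
  have hne : ∀ x ∈ ({a, b} : Set ℝ), ∀ y ∈ ({c, d} : Set ℝ), x ≠ y := by
    rintro x hx y hy
    rcases hx with rfl | hx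
    · rcases hy with rfl | hy
      · exact h1
      · rcases hy with rfl; exact h2
    · rcases hx with rfl
      rcases hy with rfl | hy
      · exact h3
      · rcases hy with rfl; exact h4
  refine chords_sep hab' hcd' ?_ ?_ ?_ ?_ hiff' E1' E2'
  · rcases min_choice a b with h | h <;> rcases min_choice c d with h' | h' <;>
      rw [h, h'] <;> apply hne <;> simp
  · rcases min_choice a b with h | h <;> rcases max_choice c d with h' | h' <;>
      rw [h, h'] <;> apply hne <;> simp
  · rcases max_choice a b with h | h <;> rcases min_choice c d with h' | h' <;>
      rw [h, h'] <;> apply hne <;> simp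
  · rcases max_choice a b with h | h <;> rcases max_choice c d with h' | h' <;>
      rw [h, h'] <;> apply hne <;> simp

/-- If a graph has a circular layout with (at most) one bundled crossing, grouping all
crossings, then it is planar. -/
theorem planar_of_circBundledLE_one {V : Type} [Fintype V] (G : SimpleGraph V)
    (h : CircBundledLE G 1) : IsPlanar G := by
  classical
  obtain ⟨f, hf, bundles, hsub, hb1, hb2, hx12, hcover⟩ := h
  set B2 : Set (Sym2 V) := (bundles 0).2 with hB2
  let sg : Sym2 V → ℝ := fun e => if e ∈ B2 then -1 else 1
  have hsgpm : ∀ e, sg e = 1 ∨ sg e = -1 := by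
    intro e; by_cases he : e ∈ B2 <;> simp [sg, he]
  have hsg_symm : ∀ u v : V, sg s(v, u) = sg s(u, v) := by
    intro u v; rw [Sym2.eq_swap]
  -- key combinatorial fact: same-side edges never cross
  have hnc : ∀ e ∈ G.edgeSet, ∀ e' ∈ G.edgeSet, sg e = sg e' → ¬ EdgesCross f e e' := by
    intro e he e' he' hss hx
    by_cases h2 : e ∈ B2
    · have h2' : e' ∈ B2 := by
        by_contra hc
        simp [sg, h2, hc] at hss
        norm_num at hss
      exact hb2 0 e h2 e' h2' hx
    · have h2' : e' ∉ B2 := by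
        by_contra hc
        simp [sg, h2, hc] at hss
        norm_num at hss
      obtain ⟨i, hi⟩ := hcover e he e' he' hx
      have hi0 : i = 0 := Subsingleton.elim _ _
      rw [hi0] at hi
      rcases hi with ⟨-, hmem⟩ | ⟨-, hmem⟩
      · exact h2' hmem
      · exact h2 hmem
  refine ⟨⟨fun v => ((f v : ℝ), 0), ?_,
    fun u v hadj => semiPath (f u) (f v) (sg s(u, v)), ?_, ?_, ?_, ?_⟩⟩
  · -- pos_inj
    intro u v huv
    have : (f u : ℝ) = f v := congrArg Prod.fst huv
    exact hf (Nat.cast_injective this)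
  · -- arc_symm
    intro u v hadj
    show semiPath ((f v : ℝ)) ((f u : ℝ)) (sg s(v, u))
      = (semiPath ((f u : ℝ)) ((f v : ℝ)) (sg s(u, v))).symm
    rw [hsg_symm]
    exact (semiPath_symm _ _ _).symm
  · -- arc_inj
    intro u v hadj
    apply semiPath_injective
    exact fun hc => hadj.ne (hf (Nat.cast_injective hc))
  · -- arc_avoid
    intro u v hadj w hw
    have R := semiPath_range (hsgpm s(u, v)) hw
    have h0 := R.1
    simp only at h0
    rcases circle_y0 h0 with hc | hc
    · exact Or.inl (hf (Nat.cast_injective hc))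
    · exact Or.inr (hf (Nat.cast_injective hc))
  · -- arcs_meet
    intro u v x y hadj hadj' hne p hp hp'
    have R1 := semiPath_range (hsgpm s(u, v)) hp
    have R2 := semiPath_range (hsgpm s(x, y)) hp'
    by_cases hy0 : p.2 = 0
    · rw [hy0] at R1
      rcases circle_y0 R1.1 with hc | hc
      · left; exact Prod.ext hc hy0
      · right; exact Prod.ext hc hy0
    · exfalso
      -- the two arcs lie on the same side
      have hεε : sg s(u, v) = sg s(x, y) := by
        have hs1 := R1.2
        have hs2 := R2.2
        rcases hsgpm s(u, v) with h1 | h1 <;> rcases hsgpm s(x, y) with h2 | h2 <;>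
          rw [h1] at hs1 ⊢ <;> rw [h2] at hs2 ⊢ <;>
          exact absurd (le_antisymm (by linarith) (by linarith)) hy0
      have E1 := R1.1
      have E2 := R2.1
      by_cases hshare : u = x ∨ u = y ∨ v = x ∨ v = y
      · -- shared endpoint: tangency
        rcases hshare with rfl | rfl | rfl | rfl
        · -- u = x
          have hvy : v ≠ y := fun hvy => hne (by rw [hvy])
          apply hy0
          refine tangent_core (p1 := p.1) (p2 := p.2) (w := (f u : ℝ))
            (m := ((f u : ℝ) + f v) / 2) (m' := ((f u : ℝ) + f y) / 2)
            (by linear_combination E1) (by linear_combination E2) ?_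
          intro hc
          exact hvy (hf (Nat.cast_injective (by linarith : (f v : ℝ) = f y)))
        · -- u = y
          have hvx : v ≠ x := fun hvx => hne (by rw [hvx, Sym2.eq_swap])
          apply hy0
          refine tangent_core (p1 := p.1) (p2 := p.2) (w := (f u : ℝ))
            (m := ((f u : ℝ) + f v) / 2) (m' := ((f x : ℝ) + f u) / 2)
            (by linear_combination E1) (by linear_combination E2) ?_
          intro hc
          exact hvx (hf (Nat.cast_injective (by linarith : (f v : ℝ) = f x)))
        · -- v = x
          have huy : u ≠ y := fun huy => hne (by rw [huy, Sym2.eq_swap])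
          apply hy0
          refine tangent_core (p1 := p.1) (p2 := p.2) (w := (f v : ℝ))
            (m := ((f u : ℝ) + f v) / 2) (m' := ((f v : ℝ) + f y) / 2)
            (by linear_combination E1) (by linear_combination E2) ?_
          intro hc
          exact huy (hf (Nat.cast_injective (by linarith : (f u : ℝ) = f y)))
        · -- v = y
          have hux : u ≠ x := fun hux => hne (by rw [hux])
          apply hy0
          refine tangent_core (p1 := p.1) (p2 := p.2) (w := (f v : ℝ))
            (m := ((f u : ℝ) + f v) / 2) (m' := ((f x : ℝ) + f v) / 2)
            (by linear_combination E1) (by linear_combination E2) ?_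
          intro hc
          exact hux (hf (Nat.cast_injective (by linarith : (f u : ℝ) = f x)))
      · push_neg at hshare
        obtain ⟨hux, huy, hvx, hvy⟩ := hshare
        have hEC : ¬ EdgesCross f s(u, v) s(x, y) :=
          hnc _ (G.mem_edgeSet.2 hadj) _ (G.mem_edgeSet.2 hadj') hεε
        have hCC : ¬ ChordsCross f u v x y := fun hc =>
          hEC ⟨u, v, x, y, rfl, rfl, hux, huy, hvx, hvy, hc⟩
        have hiffN : StrictBtw (f u) (f x) (f v) ↔ StrictBtw (f u) (f y) (f v) := by
          unfold ChordsCross at hCC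
          simp [Xor'] at hCC
          tauto
        unfold StrictBtw at hiffN
        have cast1 : ∀ k : ℕ,
            (min (f u : ℝ) (f v) < (k : ℝ) ∧ (k : ℝ) < max (f u : ℝ) (f v)) ↔
            (min (f u) (f v) < k ∧ k < max (f u) (f v)) := by
          intro k
          rw [← Nat.cast_min, ← Nat.cast_max]
          exact ⟨fun ⟨a1, a2⟩ => ⟨by exact_mod_cast a1, by exact_mod_cast a2⟩,
            fun ⟨a1, a2⟩ => ⟨by exact_mod_cast a1, by exact_mod_cast a2⟩⟩
        have hiffR : (min (f u : ℝ) (f v) < (f x : ℝ) ∧ (f x : ℝ) < max (f u : ℝ) (f v)) ↔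
            (min (f u : ℝ) (f v) < (f y : ℝ) ∧ (f y : ℝ) < max (f u : ℝ) (f v)) := by
          rw [cast1 (f x), cast1 (f y)]
          exact hiffN
        exact chords_sep'
          (fun hc => hadj.ne (hf (Nat.cast_injective hc)))
          (fun hc => hadj'.ne (hf (Nat.cast_injective hc)))
          (fun hc => hux (hf (Nat.cast_injective hc)))
          (fun hc => huy (hf (Nat.cast_injective hc)))
          (fun hc => hvx (hf (Nat.cast_injective hc)))
          (fun hc => hvy (hf (Nat.cast_injective hc)))
          hiffR E1 E2
end

section
/- In the graph G*_{r_1} obtained from an outerplanar graph H (drawn with its vertices split between two boundary arcs) by adding a hub vertex h, two boundary vertices b_1, b_2, wheel edges from h to the 6-cycle C = (v_1, b_2, v_3, u_3, b_1, u_1), and edges from b_1 (resp. b_2) to all vertices on the first (resp. second) arc, the graph G*_{r_1} is planar. -/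
open SimpleGraph

/-- Non-interleaving of two intervals given by unordered endpoint pairs. -/
def NI (a b c d : ℝ) : Prop :=
  max a b ≤ min c d ∨ max c d ≤ min a b ∨
  (min a b ≤ min c d ∧ max c d ≤ max a b) ∨ (min c d ≤ min a b ∧ max a b ≤ max c d)

lemma NI_swap₁ {a b c d : ℝ} (h : NI a b c d) : NI b a c d := by
  unfold NI at *; rw [min_comm b a, max_comm b a]; exact h

lemma NI_swap₂ {a b c d : ℝ} (h : NI a b c d) : NI a b d c := by
  unfold NI at *; rw [min_comm d c, max_comm d c]; exact h

lemma NI_comm {a b c d : ℝ} (h : NI a b c d) : NI c d a b := by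
  unfold NI at *; tauto

lemma NI_shared (a b d : ℝ) : NI a b a d := by
  unfold NI
  rcases le_total a b with h1 | h1 <;> rcases le_total a d with h2 | h2 <;>
    rcases le_total b d with h3 | h3 <;>
    simp [min_def, max_def, *] <;> tauto

lemma NI_LR {P Q c d : ℝ} (hPQ : P ≤ Q) (hc : c ≤ P ∨ Q ≤ c) (hd : d ≤ P ∨ Q ≤ d) :
    NI c d P Q := by
  unfold NI
  rw [min_eq_left hPQ, max_eq_right hPQ]
  rcases hc with hc | hc <;> rcases hd with hd | hd
  · exact Or.inl (max_le hc hd)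
  · exact Or.inr (Or.inr (Or.inl ⟨le_trans (min_le_left _ _) hc, le_trans hd (le_max_right _ _)⟩))
  · exact Or.inr (Or.inr (Or.inl ⟨le_trans (min_le_right _ _) hd, le_trans hc (le_max_left _ _)⟩))
  · exact Or.inr (Or.inl (le_min hc hd))

lemma NI_nested {a b c d : ℝ} (h1 : min a b ≤ min c d) (h2 : max c d ≤ max a b) :
    NI a b c d := Or.inr (Or.inr (Or.inl ⟨h1, h2⟩))

lemma NI_nested' {a b c d : ℝ} (h1 : min c d ≤ min a b) (h2 : max a b ≤ max c d) :
    NI a b c d := Or.inr (Or.inr (Or.inr ⟨h1, h2⟩))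

lemma NI_disj {a b c d : ℝ} (h : max a b ≤ min c d) : NI a b c d := Or.inl h

lemma NI_disj' {a b c d : ℝ} (h : max c d ≤ min a b) : NI a b c d := Or.inr (Or.inl h)

/-- Core: sorted intervals, non-interleaved, equal bump heights force a shared endpoint. -/
lemma core_meet {a b c d x : ℝ} (hab : a < b) (hcd : c < d)
    (hax : a ≤ x) (hxb : x ≤ b) (hcx : c ≤ x) (hxd : x ≤ d)
    (hNI : b ≤ c ∨ d ≤ a ∨ (a ≤ c ∧ d ≤ b) ∨ (c ≤ a ∧ b ≤ d))
    (hne : ¬(a = c ∧ b = d))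
    (heq : (x - a) * (b - x) = (x - c) * (d - x)) : x = a ∨ x = b := by
  rcases hNI with h | h | ⟨h1, h2⟩ | ⟨h1, h2⟩
  · right; linarith
  · left; linarith
  · -- [c,d] ⊆ [a,b]
    have Gc : (0:ℝ) ≤ (c - a) * (b - c) := mul_nonneg (by linarith) (by linarith)
    have Gd : (0:ℝ) ≤ (d - a) * (b - d) := mul_nonneg (by linarith) (by linarith)
    have key : (d - x) * ((c - a) * (b - c)) + (x - c) * ((d - a) * (b - d)) = 0 := by
      nlinarith [heq]
    have t1 : (d - x) * ((c - a) * (b - c)) = 0 := by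
      nlinarith [mul_nonneg (by linarith : (0:ℝ) ≤ d - x) Gc,
        mul_nonneg (by linarith : (0:ℝ) ≤ x - c) Gd]
    have t2 : (x - c) * ((d - a) * (b - d)) = 0 := by linarith
    rcases mul_eq_zero.mp t1 with h3 | h3
    · -- x = d
      have hxd' : x = d := by linarith
      rcases mul_eq_zero.mp t2 with h4 | h4
      · exfalso; linarith
      · rcases mul_eq_zero.mp h4 with h5 | h5
        · exfalso; linarith
        · right; linarith
    · rcases mul_eq_zero.mp h3 with h4 | h4
      · -- c = a
        have hca : c = a := by linarith
        rcases mul_eq_zero.mp t2 with h5 | h5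
        · left; linarith
        · rcases mul_eq_zero.mp h5 with h6 | h6
          · exfalso; linarith
          · exact absurd ⟨hca.symm, by linarith⟩ hne
      · exfalso; linarith
  · -- [a,b] ⊆ [c,d]
    have Ga : (0:ℝ) ≤ (a - c) * (d - a) := mul_nonneg (by linarith) (by linarith)
    have Gb : (0:ℝ) ≤ (b - c) * (d - b) := mul_nonneg (by linarith) (by linarith)
    have key : (b - x) * ((a - c) * (d - a)) + (x - a) * ((b - c) * (d - b)) = 0 := by
      nlinarith [heq]
    have t1 : (b - x) * ((a - c) * (d - a)) = 0 := by
      nlinarith [mul_nonneg (by linarith : (0:ℝ) ≤ b - x) Ga,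
        mul_nonneg (by linarith : (0:ℝ) ≤ x - a) Gb]
    have t2 : (x - a) * ((b - c) * (d - b)) = 0 := by linarith
    rcases mul_eq_zero.mp t1 with h3 | h3
    · right; linarith
    · rcases mul_eq_zero.mp h3 with h4 | h4
      · -- a = c
        have hac : a = c := by linarith
        rcases mul_eq_zero.mp t2 with h5 | h5
        · left; linarith
        · rcases mul_eq_zero.mp h5 with h6 | h6
          · exfalso; linarith
          · exact absurd ⟨hac, by linarith⟩ hne
      · exfalso; linarith

lemma meet_same {a b c d x : ℝ} (hab : a ≠ b) (hcd : c ≠ d)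
    (hNI : NI a b c d) (hne : ¬((a = c ∧ b = d) ∨ (a = d ∧ b = c)))
    (h1 : min a b ≤ x) (h2 : x ≤ max a b) (h3 : min c d ≤ x) (h4 : x ≤ max c d)
    (heq : (x - a) * (b - x) = (x - c) * (d - x)) : x = a ∨ x = b := by
  unfold NI at hNI
  rcases le_total a b with hab' | hab' <;> rcases le_total c d with hcd' | hcd'
  · simp only [min_eq_left hab', max_eq_right hab'] at h1 h2 hNI
    simp only [min_eq_left hcd', max_eq_right hcd'] at h3 h4 hNI
    exact core_meet (lt_of_le_of_ne hab' hab) (lt_of_le_of_ne hcd' hcd) h1 h2 h3 h4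
      (by tauto) (by tauto) heq
  · simp only [min_eq_left hab', max_eq_right hab'] at h1 h2 hNI
    simp only [min_eq_right hcd', max_eq_left hcd'] at h3 h4 hNI
    exact core_meet (lt_of_le_of_ne hab' hab) (lt_of_le_of_ne hcd' (Ne.symm hcd)) h1 h2 h3 h4
      (by tauto) (by tauto) (by nlinarith [heq])
  · simp only [min_eq_right hab', max_eq_left hab'] at h1 h2 hNI
    simp only [min_eq_left hcd', max_eq_right hcd'] at h3 h4 hNI
    have := core_meet (lt_of_le_of_ne hab' (Ne.symm hab)) (lt_of_le_of_ne hcd' hcd) h1 h2 h3 h4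
      (by tauto) (by tauto) (by nlinarith [heq])
    tauto
  · simp only [min_eq_right hab', max_eq_left hab'] at h1 h2 hNI
    simp only [min_eq_right hcd', max_eq_left hcd'] at h3 h4 hNI
    have := core_meet (lt_of_le_of_ne hab' (Ne.symm hab)) (lt_of_le_of_ne hcd' (Ne.symm hcd))
      h1 h2 h3 h4 (by tauto) (by tauto) (by nlinarith [heq])
    tauto

lemma btw_prod_nonneg {a b x : ℝ} (h1 : min a b ≤ x) (h2 : x ≤ max a b) :
    0 ≤ (x - a) * (b - x) := by
  rcases le_total a b with h | h
  · rw [min_eq_left h] at h1; rw [max_eq_right h] at h2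
    exact mul_nonneg (by linarith) (by linarith)
  · rw [min_eq_right h] at h1; rw [max_eq_left h] at h2
    nlinarith [mul_nonneg (by linarith : (0:ℝ) ≤ a - x) (by linarith : (0:ℝ) ≤ x - b)]

/-- A parabolic "bump" arc from `(a,0)` to `(b,0)` on side `ε`. -/
def bump (a b ε : ℝ) : Path ((a, 0) : ℝ × ℝ) ((b, 0) : ℝ × ℝ) where
  toFun t := (a + t * (b - a), ε * t * (1 - t) * (b - a) ^ 2)
  continuous_toFun := by fun_prop
  source' := by simp
  target' := by norm_num

lemma bump_symm (a b ε : ℝ) : (bump a b ε).symm = bump b a ε := by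
  apply Path.ext
  funext t
  simp only [Path.symm_apply, Function.comp, bump, Path.coe_mk_mk, unitInterval.coe_symm_eq]
  rw [Prod.mk.injEq]
  constructor <;> ring

lemma mem_range_bump {a b ε : ℝ} (hab : a ≠ b) (p : ℝ × ℝ) :
    p ∈ Set.range (bump a b ε) ↔
      ∃ x : ℝ, min a b ≤ x ∧ x ≤ max a b ∧ p = (x, ε * ((x - a) * (b - x))) := by
  constructor
  · rintro ⟨t, rfl⟩
    refine ⟨a + t * (b - a), ?_, ?_, ?_⟩
    · rcases le_total a b with h | h
      · rw [min_eq_left h]; nlinarith [t.2.1, t.2.2]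
      · rw [min_eq_right h]; nlinarith [t.2.1, t.2.2]
    · rcases le_total a b with h | h
      · rw [max_eq_right h]; nlinarith [t.2.1, t.2.2]
      · rw [max_eq_left h]; nlinarith [t.2.1, t.2.2]
    · show (_, _) = (_, _)
      simp only [bump, Path.coe_mk_mk, Prod.mk.injEq]
      exact ⟨trivial, by ring⟩
  · rintro ⟨x, h1, h2, rfl⟩
    have hba : b - a ≠ 0 := sub_ne_zero.mpr (Ne.symm hab)
    have ht : (x - a) / (b - a) ∈ unitInterval := by
      constructor
      · rcases lt_or_gt_of_ne hab with hh | hh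
        · rw [min_eq_left hh.le] at h1
          exact div_nonneg (by linarith) (by linarith)
        · rw [min_eq_right hh.le] at h1
          rw [max_eq_left hh.le] at h2
          exact div_nonneg_of_nonpos (by linarith) (by linarith)

      · rcases lt_or_gt_of_ne hab with hh | hh
        · rw [max_eq_right hh.le] at h2
          rw [div_le_one (by linarith)]; linarith
        · rw [min_eq_right hh.le] at h1
          rw [div_le_one_of_neg (by linarith)]; linarith
    refine ⟨⟨(x - a) / (b - a), ht⟩, ?_⟩
    show (_, _) = (_, _)
    simp only [bump, Path.coe_mk_mk, Prod.mk.injEq]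
    constructor
    · field_simp; ring
    · field_simp
      ring

def NIn (a b c d : ℕ) : Prop :=
  max a b ≤ min c d ∨ max c d ≤ min a b ∨
  (min a b ≤ min c d ∧ max c d ≤ max a b) ∨ (min c d ≤ min a b ∧ max a b ≤ max c d)

lemma NI_disj_of {a b c d : ℝ} (h1 : a ≤ c) (h2 : a ≤ d) (h3 : b ≤ c) (h4 : b ≤ d) :
    NI a b c d := NI_disj (max_le (le_min h1 h2) (le_min h3 h4))

lemma NI_disj_of' {a b c d : ℝ} (h1 : c ≤ a) (h2 : c ≤ b) (h3 : d ≤ a) (h4 : d ≤ b) :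
    NI a b c d := NI_disj' (max_le (le_min h1 h2) (le_min h3 h4))

lemma NI_nested_of {a b c d : ℝ} (h1 : a ≤ c) (h2 : a ≤ d) (h3 : c ≤ b) (h4 : d ≤ b) :
    NI a b c d := by
  have hab : a ≤ b := h1.trans h3
  exact NI_nested (by rw [min_eq_left hab]; exact le_min h1 h2)
    (by rw [max_eq_right hab]; exact max_le h3 h4)

lemma NI_nested_of' {a b c d : ℝ} (h1 : c ≤ a) (h2 : c ≤ b) (h3 : a ≤ d) (h4 : b ≤ d) :
    NI a b c d := NI_comm (NI_nested_of h1 h2 h3 h4)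


/-- coordinates on the spine -/
noncomputable def Xf {V : Type} [DecidableEq V] (A : Finset V) (f : V → ℕ) (L : ℝ) : V ⊕ Fin 3 → ℝ
  | .inl v => (f v : ℝ) + (if v ∈ A then 0 else 1)
  | .inr i => L + (if i = 0 then 1 else if i = 1 then 1/2 else 3/2)

/-- page assignment (as a sign ±1), symmetric in its two arguments -/
noncomputable def sd {V : Type} [DecidableEq V] (u₁ v₁ : V) : V ⊕ Fin 3 → V ⊕ Fin 3 → ℝ
  | .inl _, .inl _ => -1
  | .inr i, .inl w => if i = 0 ∧ ¬(w = u₁ ∨ w = v₁) then -1 else 1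
  | .inl w, .inr i => if i = 0 ∧ ¬(w = u₁ ∨ w = v₁) then -1 else 1
  | .inr _, .inr _ => 1

variable {V : Type} [DecidableEq V] {A : Finset V} {f : V → ℕ} {L : ℝ} {u₁ v₁ : V}

lemma sd_comm (u v : V ⊕ Fin 3) : sd u₁ v₁ u v = sd u₁ v₁ v u := by
  cases u <;> cases v <;> rfl

lemma sd_unit (u v : V ⊕ Fin 3) : sd u₁ v₁ u v = 1 ∨ sd u₁ v₁ u v = -1 := by
  cases u <;> cases v
  · right; rfl
  · simp only [sd]; split_ifs
    · right; rfl
    · left; rfl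
  · simp only [sd]; split_ifs
    · right; rfl
    · left; rfl
  · left; rfl

lemma sd_ne_zero (u v : V ⊕ Fin 3) : sd u₁ v₁ u v ≠ 0 := by
  rcases sd_unit (u₁ := u₁) (v₁ := v₁) u v with h | h <;> rw [h] <;> norm_num

lemma sd_ll (a b : V) : sd u₁ v₁ (.inl a) (.inl b) = -1 := rfl

lemma sd_hl (w : V) :
    sd u₁ v₁ (.inr 0) (.inl w) = if w = u₁ ∨ w = v₁ then 1 else -1 := by
  simp only [sd]
  split_ifs with h1 h2 h2 <;> tauto

lemma sd_b1l (w : V) : sd u₁ v₁ (.inr 1) (.inl w) = 1 := by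
  simp only [sd]
  rw [if_neg]; rintro ⟨h, -⟩; exact absurd h (by decide)

lemma sd_b2l (w : V) : sd u₁ v₁ (.inr 2) (.inl w) = 1 := by
  simp only [sd]
  rw [if_neg]; rintro ⟨h, -⟩; exact absurd h (by decide)

lemma sd_rr (i j : Fin 3) : sd u₁ v₁ (.inr i) (.inr j) = 1 := rfl

lemma Xf_A {a : V} (ha : a ∈ A) : Xf A f L (.inl a) = f a := by simp [Xf, ha]

lemma Xf_nA {a : V} (ha : a ∉ A) : Xf A f L (.inl a) = f a + 1 := by simp [Xf, ha]

lemma Xf_h : Xf A f L (.inr 0) = L + 1 := by simp [Xf]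

lemma Xf_b1 : Xf A f L (.inr 1) = L + 1/2 := by
  show L + (if (1:Fin 3) = 0 then 1 else if (1:Fin 3) = 1 then 1/2 else 3/2) = L + 1/2
  rw [if_neg (by decide), if_pos rfl]

lemma Xf_b2 : Xf A f L (.inr 2) = L + 3/2 := by
  show L + (if (2:Fin 3) = 0 then 1 else if (2:Fin 3) = 1 then 1/2 else 3/2) = L + 3/2
  rw [if_neg (by decide), if_neg (by decide)]

/-- Augmenting an outerplanar graph `H`, drawn with its vertices split between two
boundary arcs `A` (from `u₁` to `u₃`) and `B` (from `v₃` to `v₁`), by a hub vertex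
`h = inr 0`, boundary vertices `b₁ = inr 1`, `b₂ = inr 2`, the wheel on the 6-cycle
`(v₁, b₂, v₃, u₃, b₁, u₁)` centered at `h`, edges from `b₁` to all vertices of `A`, and
edges from `b₂` to all vertices of `B`, yields a planar graph. -/
theorem augmented_region_graph_planar {V : Type} [Fintype V] [DecidableEq V]
    (H : SimpleGraph V) (A B : Finset V) (u₁ u₃ v₃ v₁ : V)
    (hcover : ∀ v : V, v ∈ A ∨ v ∈ B) (hdisj : Disjoint A B)
    (hu₁ : u₁ ∈ A) (hu₃ : u₃ ∈ A) (hv₃ : v₃ ∈ B) (hv₁ : v₁ ∈ B)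
    (f : V → ℕ) (hfinj : Function.Injective f)
    (houter : ∀ e ∈ H.edgeSet, ∀ e' ∈ H.edgeSet, ¬ EdgesCross f e e')
    (hAB : ∀ a ∈ A, ∀ b ∈ B, f a < f b)
    (hA : ∀ a ∈ A, f u₁ ≤ f a ∧ f a ≤ f u₃)
    (hB : ∀ b ∈ B, f v₃ ≤ f b ∧ f b ≤ f v₁) :
    IsPlanar (SimpleGraph.fromEdgeSet (
      (Sym2.map Sum.inl '' H.edgeSet) ∪
      {s((Sum.inr 0 : V ⊕ Fin 3), Sum.inr 1), s((Sum.inr 0 : V ⊕ Fin 3), Sum.inr 2),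
        s((Sum.inr 0 : V ⊕ Fin 3), Sum.inl u₁), s((Sum.inr 0 : V ⊕ Fin 3), Sum.inl u₃),
        s((Sum.inr 0 : V ⊕ Fin 3), Sum.inl v₁), s((Sum.inr 0 : V ⊕ Fin 3), Sum.inl v₃)} ∪
      {s((Sum.inl v₁ : V ⊕ Fin 3), Sum.inr 2), s((Sum.inr 2 : V ⊕ Fin 3), Sum.inl v₃),
        s((Sum.inl v₃ : V ⊕ Fin 3), Sum.inl u₃), s((Sum.inl u₃ : V ⊕ Fin 3), Sum.inr 1),
        s((Sum.inr 1 : V ⊕ Fin 3), Sum.inl u₁), s((Sum.inl u₁ : V ⊕ Fin 3), Sum.inl v₁)} ∪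
      ((fun a => s((Sum.inr 1 : V ⊕ Fin 3), Sum.inl a)) '' (A : Set V)) ∪
      ((fun b => s((Sum.inr 2 : V ⊕ Fin 3), Sum.inl b)) '' (B : Set V)))) := by
  classical
  set S : Set (Sym2 (V ⊕ Fin 3)) :=
      (Sym2.map Sum.inl '' H.edgeSet) ∪
      {s((Sum.inr 0 : V ⊕ Fin 3), Sum.inr 1), s((Sum.inr 0 : V ⊕ Fin 3), Sum.inr 2),
        s((Sum.inr 0 : V ⊕ Fin 3), Sum.inl u₁), s((Sum.inr 0 : V ⊕ Fin 3), Sum.inl u₃),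
        s((Sum.inr 0 : V ⊕ Fin 3), Sum.inl v₁), s((Sum.inr 0 : V ⊕ Fin 3), Sum.inl v₃)} ∪
      {s((Sum.inl v₁ : V ⊕ Fin 3), Sum.inr 2), s((Sum.inr 2 : V ⊕ Fin 3), Sum.inl v₃),
        s((Sum.inl v₃ : V ⊕ Fin 3), Sum.inl u₃), s((Sum.inl u₃ : V ⊕ Fin 3), Sum.inr 1),
        s((Sum.inr 1 : V ⊕ Fin 3), Sum.inl u₁), s((Sum.inl u₁ : V ⊕ Fin 3), Sum.inl v₁)} ∪
      ((fun a => s((Sum.inr 1 : V ⊕ Fin 3), Sum.inl a)) '' (A : Set V)) ∪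
      ((fun b => s((Sum.inr 2 : V ⊕ Fin 3), Sum.inl b)) '' (B : Set V)) with hS
  set X : V ⊕ Fin 3 → ℝ := Xf A f ((f u₃ : ℕ) : ℝ) with hXdef
  have hdisjL := Finset.disjoint_left.mp hdisj
  have XA : ∀ a ∈ A, X (Sum.inl a) = (f a : ℝ) := fun a ha => Xf_A ha
  have XB : ∀ b ∈ B, X (Sum.inl b) = (f b : ℝ) + 1 :=
    fun b hb => Xf_nA (fun hbA => hdisjL hbA hb)
  have Xh : X (Sum.inr 0) = (f u₃ : ℝ) + 1 := Xf_h
  have Xb1 : X (Sum.inr 1) = (f u₃ : ℝ) + 1/2 := Xf_b1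
  have Xb2 : X (Sum.inr 2) = (f u₃ : ℝ) + 3/2 := Xf_b2
  have hgap : (f u₃ : ℝ) + 1 ≤ (f v₃ : ℝ) := by
    have := hAB u₃ hu₃ v₃ hv₃; exact_mod_cast Nat.succ_le_of_lt this
  have hfu₁u₃ : (f u₁ : ℝ) ≤ (f u₃ : ℝ) := by exact_mod_cast (hA u₁ hu₁).2
  have hfv₃v₁ : (f v₃ : ℝ) ≤ (f v₁ : ℝ) := by exact_mod_cast (hB v₁ hv₁).1
  have bndA : ∀ a ∈ A, (f u₁ : ℝ) ≤ X (Sum.inl a) ∧ X (Sum.inl a) ≤ (f u₃ : ℝ) := by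
    intro a ha; rw [XA a ha]
    constructor
    · exact_mod_cast (hA a ha).1
    · exact_mod_cast (hA a ha).2
  have bndB : ∀ b ∈ B, (f v₃ : ℝ) + 1 ≤ X (Sum.inl b) ∧ X (Sum.inl b) ≤ (f v₁ : ℝ) + 1 := by
    intro b hb; rw [XB b hb]
    constructor
    · have : (f v₃ : ℝ) ≤ (f b : ℝ) := by exact_mod_cast (hB b hb).1
      linarith
    · have : (f b : ℝ) ≤ (f v₁ : ℝ) := by exact_mod_cast (hB b hb).2
      linarith
  have gapX : ∀ w : V, X (Sum.inl w) ≤ (f u₃ : ℝ) ∨ (f v₃ : ℝ) + 1 ≤ X (Sum.inl w) := by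
    intro w
    rcases hcover w with hw | hw
    · exact Or.inl (bndA w hw).2
    · exact Or.inr (bndB w hw).1
  have Xle : ∀ p q : V, f p ≤ f q → X (Sum.inl p) ≤ X (Sum.inl q) := by
    intro p q hpq
    rcases hcover p with hp | hp <;> rcases hcover q with hq | hq
    · rw [XA p hp, XA q hq]; exact_mod_cast hpq
    · rw [XA p hp, XB q hq]
      have : (f p : ℝ) ≤ (f q : ℝ) := by exact_mod_cast hpq
      linarith
    · exact absurd hpq (not_le.mpr (hAB q hq p hp))
    · rw [XB p hp, XB q hq]
      have : (f p : ℝ) ≤ (f q : ℝ) := by exact_mod_cast hpq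
      linarith
  have Xlt : ∀ p q : V, f p < f q → X (Sum.inl p) < X (Sum.inl q) := by
    intro p q hpq
    rcases hcover p with hp | hp <;> rcases hcover q with hq | hq
    · rw [XA p hp, XA q hq]; exact_mod_cast hpq
    · rw [XA p hp, XB q hq]
      have : (f p : ℝ) < (f q : ℝ) := by exact_mod_cast hpq
      linarith
    · exact absurd hpq (not_lt.mpr (le_of_lt (hAB q hq p hp)))
    · rw [XB p hp, XB q hq]
      have : (f p : ℝ) < (f q : ℝ) := by exact_mod_cast hpq
      linarith
  have Xrgap : ∀ (i : Fin 3), (f u₃ : ℝ) < X (Sum.inr i) ∧ X (Sum.inr i) < (f v₃ : ℝ) + 1 := by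
    intro i
    fin_cases i <;> norm_num [hXdef, Xf, Fin.ext_iff] <;> (try constructor) <;>
      linarith [hAB u₃ hu₃ v₃ hv₃, hgap]
  have Xinj : Function.Injective X := by
    intro w w' hww
    rcases w with p | i <;> rcases w' with q | j
    · by_cases hpq : p = q
      · rw [hpq]
      · rcases lt_or_gt_of_ne (fun e => hpq (hfinj e)) with hlt | hlt
        · exact absurd hww (ne_of_lt (Xlt p q hlt))
        · exact absurd hww (ne_of_gt (Xlt q p hlt))
    · exfalso
      rcases gapX p with hp | hp
      · have := (Xrgap j).1; linarith [hww.le, hww.ge]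
      · have := (Xrgap j).2; linarith [hww.le, hww.ge]
    · exfalso
      rcases gapX q with hp | hp
      · have := (Xrgap i).1; linarith [hww.le, hww.ge]
      · have := (Xrgap i).2; linarith [hww.le, hww.ge]
    · fin_cases i <;> fin_cases j <;> first | rfl | norm_num [hXdef, Xf, Fin.ext_iff] at hww
  have transfer : ∀ p q r s : V, NIn (f p) (f q) (f r) (f s) →
      NI (X (Sum.inl p)) (X (Sum.inl q)) (X (Sum.inl r)) (X (Sum.inl s)) := by
    intro p q r s hn
    unfold NIn at hn
    unfold NI
    rcases le_total (f p) (f q) with h1 | h1 <;> rcases le_total (f r) (f s) with h2 | h2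
    · rw [min_eq_left h1, max_eq_right h1, min_eq_left h2, max_eq_right h2] at hn
      rw [min_eq_left (Xle p q h1), max_eq_right (Xle p q h1),
        min_eq_left (Xle r s h2), max_eq_right (Xle r s h2)]
      rcases hn with h | h | ⟨h, h'⟩ | ⟨h, h'⟩
      · exact Or.inl (Xle _ _ h)
      · exact Or.inr (Or.inl (Xle _ _ h))
      · exact Or.inr (Or.inr (Or.inl ⟨Xle _ _ h, Xle _ _ h'⟩))
      · exact Or.inr (Or.inr (Or.inr ⟨Xle _ _ h, Xle _ _ h'⟩))
    · rw [min_eq_left h1, max_eq_right h1, min_eq_right h2, max_eq_left h2] at hn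
      rw [min_eq_left (Xle p q h1), max_eq_right (Xle p q h1),
        min_eq_right (Xle s r h2), max_eq_left (Xle s r h2)]
      rcases hn with h | h | ⟨h, h'⟩ | ⟨h, h'⟩
      · exact Or.inl (Xle _ _ h)
      · exact Or.inr (Or.inl (Xle _ _ h))
      · exact Or.inr (Or.inr (Or.inl ⟨Xle _ _ h, Xle _ _ h'⟩))
      · exact Or.inr (Or.inr (Or.inr ⟨Xle _ _ h, Xle _ _ h'⟩))
    · rw [min_eq_right h1, max_eq_left h1, min_eq_left h2, max_eq_right h2] at hn
      rw [min_eq_right (Xle q p h1), max_eq_left (Xle q p h1),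
        min_eq_left (Xle r s h2), max_eq_right (Xle r s h2)]
      rcases hn with h | h | ⟨h, h'⟩ | ⟨h, h'⟩
      · exact Or.inl (Xle _ _ h)
      · exact Or.inr (Or.inl (Xle _ _ h))
      · exact Or.inr (Or.inr (Or.inl ⟨Xle _ _ h, Xle _ _ h'⟩))
      · exact Or.inr (Or.inr (Or.inr ⟨Xle _ _ h, Xle _ _ h'⟩))
    · rw [min_eq_right h1, max_eq_left h1, min_eq_right h2, max_eq_left h2] at hn
      rw [min_eq_right (Xle q p h1), max_eq_left (Xle q p h1),
        min_eq_right (Xle s r h2), max_eq_left (Xle s r h2)]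
      rcases hn with h | h | ⟨h, h'⟩ | ⟨h, h'⟩
      · exact Or.inl (Xle _ _ h)
      · exact Or.inr (Or.inl (Xle _ _ h))
      · exact Or.inr (Or.inr (Or.inl ⟨Xle _ _ h, Xle _ _ h'⟩))
      · exact Or.inr (Or.inr (Or.inr ⟨Xle _ _ h, Xle _ _ h'⟩))
  have fbnd : ∀ w : V, f u₁ ≤ f w ∧ f w ≤ f v₁ := by
    intro w
    rcases hcover w with hw | hw
    · exact ⟨(hA w hw).1, le_of_lt (hAB w hw v₁ hv₁)⟩
    · exact ⟨le_of_lt (hAB u₁ hu₁ w hw), (hB w hw).2⟩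
  have fgap : ∀ w : V, f w ≤ f u₃ ∨ f v₃ ≤ f w := fun w =>
    (hcover w).imp (fun hw => (hA w hw).2) (fun hw => (hB w hw).1)
  have DD : ∀ a b c d : V, (H.Adj a b ∨ (a = u₁ ∧ b = v₁) ∨ (a = u₃ ∧ b = v₃)) →
      (H.Adj c d ∨ (c = u₁ ∧ d = v₁) ∨ (c = u₃ ∧ d = v₃)) →
      NIn (f a) (f b) (f c) (f d) := by
    intro a b c d h1 h2
    have g1 := fgap a; have g2 := fgap b; have g3 := fgap c; have g4 := fgap d
    have b1 := fbnd a; have b2 := fbnd b; have b3 := fbnd c; have b4 := fbnd d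
    have hu3v3 : f u₃ < f v₃ := hAB u₃ hu₃ v₃ hv₃
    rcases h1 with h1 | ⟨rfl, rfl⟩ | ⟨rfl, rfl⟩ <;>
      rcases h2 with h2 | ⟨rfl, rfl⟩ | ⟨rfl, rfl⟩
    · -- H.Adj vs H.Adj
      by_cases hac : a = c
      · subst hac; unfold NIn; omega
      by_cases had : a = d
      · subst had; unfold NIn; omega
      by_cases hbc : b = c
      · subst hbc; unfold NIn; omega
      by_cases hbd : b = d
      · subst hbd; unfold NIn; omega
      have hncc : ¬ ChordsCross f a b c d := fun hcc =>
        houter s(a, b) (H.mem_edgeSet.mpr h1) s(c, d) (H.mem_edgeSet.mpr h2)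
          ⟨a, b, c, d, rfl, rfl, hac, had, hbc, hbd, hcc⟩
      unfold ChordsCross StrictBtw Xor' at hncc; rw [xor_def] at hncc
      unfold NIn; omega
    all_goals (unfold NIn; omega)
  have classify : ∀ w₁ w₂ : V ⊕ Fin 3, s(w₁, w₂) ∈ S →
      (∃ a b : V, s(w₁,w₂) = s(Sum.inl a, Sum.inl b) ∧
        (H.Adj a b ∨ (a = u₁ ∧ b = v₁) ∨ (a = u₃ ∧ b = v₃))) ∨
      (s(w₁,w₂) = s((Sum.inr 0 : V ⊕ Fin 3), Sum.inr 1) ∨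
        s(w₁,w₂) = s((Sum.inr 0 : V ⊕ Fin 3), Sum.inr 2)) ∨
      (∃ w : V, s(w₁,w₂) = s((Sum.inr 0 : V ⊕ Fin 3), Sum.inl w) ∧
        (w = u₁ ∨ w = u₃ ∨ w = v₃ ∨ w = v₁)) ∨
      (∃ a, a ∈ A ∧ s(w₁,w₂) = s((Sum.inr 1 : V ⊕ Fin 3), Sum.inl a)) ∨
      (∃ b, b ∈ B ∧ s(w₁,w₂) = s((Sum.inr 2 : V ⊕ Fin 3), Sum.inl b)) := by
    intro w₁ w₂ hmem
    rw [hS] at hmem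
    simp only [Set.mem_union] at hmem
    rcases hmem with (((hmem | hmem) | hmem) | hmem) | hmem
    · obtain ⟨e₀, he₀, hmap⟩ := hmem
      induction e₀ using Sym2.ind with
      | _ a b =>
        rw [Sym2.map_pair_eq] at hmap
        exact Or.inl ⟨a, b, hmap.symm, Or.inl (H.mem_edgeSet.mp he₀)⟩
    · simp only [Set.mem_insert_iff, Set.mem_singleton_iff] at hmem
      rcases hmem with h | h | h | h | h | h
      · exact Or.inr (Or.inl (Or.inl h))
      · exact Or.inr (Or.inl (Or.inr h))
      · exact Or.inr (Or.inr (Or.inl ⟨u₁, h, Or.inl rfl⟩))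
      · exact Or.inr (Or.inr (Or.inl ⟨u₃, h, Or.inr (Or.inl rfl)⟩))
      · exact Or.inr (Or.inr (Or.inl ⟨v₁, h, Or.inr (Or.inr (Or.inr rfl))⟩))
      · exact Or.inr (Or.inr (Or.inl ⟨v₃, h, Or.inr (Or.inr (Or.inl rfl))⟩))
    · simp only [Set.mem_insert_iff, Set.mem_singleton_iff] at hmem
      rcases hmem with h | h | h | h | h | h
      · exact Or.inr (Or.inr (Or.inr (Or.inr ⟨v₁, hv₁, h.trans (Sym2.eq_swap)⟩)))
      · exact Or.inr (Or.inr (Or.inr (Or.inr ⟨v₃, hv₃, h⟩)))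
      · exact Or.inl ⟨u₃, v₃, h.trans (Sym2.eq_swap), Or.inr (Or.inr ⟨rfl, rfl⟩)⟩
      · exact Or.inr (Or.inr (Or.inr (Or.inl ⟨u₃, hu₃, h.trans (Sym2.eq_swap)⟩)))
      · exact Or.inr (Or.inr (Or.inr (Or.inl ⟨u₁, hu₁, h⟩)))
      · exact Or.inl ⟨u₁, v₁, h, Or.inr (Or.inl ⟨rfl, rfl⟩)⟩
    · obtain ⟨a, ha, heq⟩ := hmem
      exact Or.inr (Or.inr (Or.inr (Or.inl ⟨a, ha, heq.symm⟩)))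
    · obtain ⟨b, hb, heq⟩ := hmem
      exact Or.inr (Or.inr (Or.inr (Or.inr ⟨b, hb, heq.symm⟩)))
  have sdCongr : ∀ u v α β : V ⊕ Fin 3, s(u,v) = s(α,β) →
      sd u₁ v₁ u v = sd u₁ v₁ α β := by
    intro u v α β h
    rcases Sym2.eq_iff.mp h with ⟨rfl, rfl⟩ | ⟨rfl, rfl⟩
    · rfl
    · exact sd_comm _ _
  have NIcongr : ∀ u v x y α β γ δ : V ⊕ Fin 3, s(u,v) = s(α,β) → s(x,y) = s(γ,δ) →
      NI (X α) (X β) (X γ) (X δ) → NI (X u) (X v) (X x) (X y) := by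
    intro u v x y α β γ δ h1 h2 hni
    rcases Sym2.eq_iff.mp h1 with ⟨rfl, rfl⟩ | ⟨rfl, rfl⟩ <;>
      rcases Sym2.eq_iff.mp h2 with ⟨rfl, rfl⟩ | ⟨rfl, rfl⟩
    · exact hni
    · exact NI_swap₂ hni
    · exact NI_swap₁ hni
    · exact NI_swap₁ (NI_swap₂ hni)
  have NImain : ∀ u v x y : V ⊕ Fin 3, s(u,v) ∈ S → s(x,y) ∈ S →
      sd u₁ v₁ u v = sd u₁ v₁ x y → NI (X u) (X v) (X x) (X y) := by
    intro u v x y h1 h2 hside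
    rcases classify u v h1 with ⟨a, b, e1, hD⟩ | (e1 | e1) | ⟨w, e1, hw⟩ |
      ⟨a, haA, e1⟩ | ⟨b, hbB, e1⟩
    · -- C1
      rcases classify x y h2 with ⟨c, d, e2, hD'⟩ | (e2 | e2) | ⟨w', e2, hw'⟩ |
        ⟨c, hcA, e2⟩ | ⟨d, hdB, e2⟩
      · exact NIcongr _ _ _ _ _ _ _ _ e1 e2 (transfer a b c d (DD a b c d hD hD'))
      · rw [sdCongr _ _ _ _ e1, sdCongr _ _ _ _ e2, sd_ll, sd_rr] at hside
        norm_num at hside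
      · rw [sdCongr _ _ _ _ e1, sdCongr _ _ _ _ e2, sd_ll, sd_rr] at hside
        norm_num at hside
      · by_cases hww : w' = u₁ ∨ w' = v₁
        · rw [sdCongr _ _ _ _ e1, sdCongr _ _ _ _ e2, sd_ll, sd_hl, if_pos hww] at hside
          norm_num at hside
        · have hw3 : w' = u₃ ∨ w' = v₃ := by tauto
          refine NIcongr _ _ _ _ _ _ _ _ e1 e2 ?_
          rcases hw3 with h3 | h3 <;> rw [h3]
          · refine NI_swap₂ (NI_LR (by rw [Xh, XA u₃ hu₃]; linarith) ?_ ?_)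
            · rcases gapX a with h | h
              · left; rw [XA u₃ hu₃]; linarith
              · right; rw [Xh]; linarith
            · rcases gapX b with h | h
              · left; rw [XA u₃ hu₃]; linarith
              · right; rw [Xh]; linarith
          · refine NI_LR (by rw [Xh, XB v₃ hv₃]; linarith) ?_ ?_
            · rcases gapX a with h | h
              · left; rw [Xh]; linarith
              · right; rw [XB v₃ hv₃]; linarith
            · rcases gapX b with h | h
              · left; rw [Xh]; linarith
              · right; rw [XB v₃ hv₃]; linarith
      · rw [sdCongr _ _ _ _ e1, sdCongr _ _ _ _ e2, sd_ll, sd_b1l] at hside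
        norm_num at hside
      · rw [sdCongr _ _ _ _ e1, sdCongr _ _ _ _ e2, sd_ll, sd_b2l] at hside
        norm_num at hside
    · -- C2a : s(u,v) = s(inr 0, inr 1)
      rcases classify x y h2 with ⟨c, d, e2, hD'⟩ | (e2 | e2) | ⟨w', e2, hw'⟩ |
        ⟨c, hcA, e2⟩ | ⟨d, hdB, e2⟩
      · rw [sdCongr _ _ _ _ e1, sdCongr _ _ _ _ e2, sd_rr, sd_ll] at hside
        norm_num at hside
      · exact NIcongr _ _ _ _ _ _ _ _ e1 e2 (NI_shared _ _ _)
      · exact NIcongr _ _ _ _ _ _ _ _ e1 e2 (NI_shared _ _ _)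
      · exact NIcongr _ _ _ _ _ _ _ _ e1 e2 (NI_shared _ _ _)
      · refine NIcongr _ _ _ _ _ _ _ _ e1 e2 (NI_swap₁ (NI_shared _ _ _))
      · refine NIcongr _ _ _ _ _ _ _ _ e1 e2 (NI_disj_of ?_ ?_ ?_ ?_)
        · rw [Xh, Xb2]; linarith
        · rw [Xh]; linarith [(bndB d hdB).1, hgap]
        · rw [Xb1, Xb2]; linarith
        · rw [Xb1]; linarith [(bndB d hdB).1, hgap]
    · -- C2b : s(u,v) = s(inr 0, inr 2)
      rcases classify x y h2 with ⟨c, d, e2, hD'⟩ | (e2 | e2) | ⟨w', e2, hw'⟩ |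
        ⟨c, hcA, e2⟩ | ⟨d, hdB, e2⟩
      · rw [sdCongr _ _ _ _ e1, sdCongr _ _ _ _ e2, sd_rr, sd_ll] at hside
        norm_num at hside
      · exact NIcongr _ _ _ _ _ _ _ _ e1 e2 (NI_shared _ _ _)
      · exact NIcongr _ _ _ _ _ _ _ _ e1 e2 (NI_shared _ _ _)
      · exact NIcongr _ _ _ _ _ _ _ _ e1 e2 (NI_shared _ _ _)
      · refine NIcongr _ _ _ _ _ _ _ _ e1 e2 (NI_disj_of' ?_ ?_ ?_ ?_)
        · rw [Xb1, Xh]; linarith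
        · rw [Xb1, Xb2]; linarith
        · rw [Xh]; linarith [(bndA c hcA).2]
        · rw [Xb2]; linarith [(bndA c hcA).2]
      · refine NIcongr _ _ _ _ _ _ _ _ e1 e2 (NI_swap₁ (NI_shared _ _ _))
    · -- C3 : s(u,v) = s(inr 0, inl w)
      rcases classify x y h2 with ⟨c, d, e2, hD'⟩ | (e2 | e2) | ⟨w', e2, hw'⟩ |
        ⟨c, hcA, e2⟩ | ⟨d, hdB, e2⟩
      · by_cases hww : w = u₁ ∨ w = v₁
        · rw [sdCongr _ _ _ _ e1, sdCongr _ _ _ _ e2, sd_hl, if_pos hww, sd_ll] at hside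
          norm_num at hside
        · have hw3 : w = u₃ ∨ w = v₃ := by tauto
          refine NIcongr _ _ _ _ _ _ _ _ e1 e2 (NI_comm ?_)
          rcases hw3 with h3 | h3 <;> rw [h3]
          · refine NI_swap₂ (NI_LR (by rw [Xh, XA u₃ hu₃]; linarith) ?_ ?_)
            · rcases gapX c with h | h
              · left; rw [XA u₃ hu₃]; linarith
              · right; rw [Xh]; linarith
            · rcases gapX d with h | h
              · left; rw [XA u₃ hu₃]; linarith
              · right; rw [Xh]; linarith
          · refine NI_LR (by rw [Xh, XB v₃ hv₃]; linarith) ?_ ?_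
            · rcases gapX c with h | h
              · left; rw [Xh]; linarith
              · right; rw [XB v₃ hv₃]; linarith
            · rcases gapX d with h | h
              · left; rw [Xh]; linarith
              · right; rw [XB v₃ hv₃]; linarith
      · exact NIcongr _ _ _ _ _ _ _ _ e1 e2 (NI_shared _ _ _)
      · exact NIcongr _ _ _ _ _ _ _ _ e1 e2 (NI_shared _ _ _)
      · exact NIcongr _ _ _ _ _ _ _ _ e1 e2 (NI_shared _ _ _)
      · by_cases hww : w = u₁ ∨ w = v₁
        · refine NIcongr _ _ _ _ _ _ _ _ e1 e2 ?_
          rcases hww with h3 | h3 <;> rw [h3]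
          · refine NI_swap₁ (NI_nested_of ?_ ?_ ?_ ?_)
            · rw [XA u₁ hu₁, Xb1]; linarith
            · rw [XA u₁ hu₁]; exact (bndA c hcA).1
            · rw [Xb1, Xh]; linarith
            · rw [Xh]; linarith [(bndA c hcA).2]
          · refine NI_disj_of' ?_ ?_ ?_ ?_
            · rw [Xb1, Xh]; linarith
            · rw [Xb1, XB v₁ hv₁]; linarith [hgap, hfv₃v₁]
            · rw [Xh]; linarith [(bndA c hcA).2]
            · rw [XB v₁ hv₁]; linarith [(bndA c hcA).2, hgap, hfv₃v₁]
        · rw [sdCongr _ _ _ _ e1, sdCongr _ _ _ _ e2, sd_hl, if_neg hww, sd_b1l] at hside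
          norm_num at hside
      · by_cases hww : w = u₁ ∨ w = v₁
        · refine NIcongr _ _ _ _ _ _ _ _ e1 e2 ?_
          rcases hww with h3 | h3 <;> rw [h3]
          · refine NI_disj_of ?_ ?_ ?_ ?_
            · rw [Xh, Xb2]; linarith
            · rw [Xh]; linarith [(bndB d hdB).1, hgap]
            · rw [XA u₁ hu₁, Xb2]; linarith
            · rw [XA u₁ hu₁]; linarith [(bndB d hdB).1, hgap, hfu₁u₃]
          · refine NI_nested_of ?_ ?_ ?_ ?_
            · rw [Xh, Xb2]; linarith
            · rw [Xh]; linarith [(bndB d hdB).1, hgap]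
            · rw [Xb2, XB v₁ hv₁]; linarith [hgap, hfv₃v₁]
            · rw [XB v₁ hv₁]; linarith [(bndB d hdB).2]
        · rw [sdCongr _ _ _ _ e1, sdCongr _ _ _ _ e2, sd_hl, if_neg hww, sd_b2l] at hside
          norm_num at hside
    · -- C4 : s(u,v) = s(inr 1, inl a)
      rcases classify x y h2 with ⟨c, d, e2, hD'⟩ | (e2 | e2) | ⟨w', e2, hw'⟩ |
        ⟨c, hcA, e2⟩ | ⟨d, hdB, e2⟩
      · rw [sdCongr _ _ _ _ e1, sdCongr _ _ _ _ e2, sd_b1l, sd_ll] at hside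
        norm_num at hside
      · exact NIcongr _ _ _ _ _ _ _ _ e1 e2 (NI_comm (NI_swap₁ (NI_shared _ _ _)))
      · refine NIcongr _ _ _ _ _ _ _ _ e1 e2 (NI_disj_of ?_ ?_ ?_ ?_)
        · rw [Xb1, Xh]; linarith
        · rw [Xb1, Xb2]; linarith
        · rw [Xh]; linarith [(bndA a haA).2]
        · rw [Xb2]; linarith [(bndA a haA).2]
      · by_cases hww : w' = u₁ ∨ w' = v₁
        · refine NIcongr _ _ _ _ _ _ _ _ e1 e2 (NI_comm ?_)
          rcases hww with h3 | h3 <;> rw [h3]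
          · refine NI_swap₁ (NI_nested_of ?_ ?_ ?_ ?_)
            · rw [XA u₁ hu₁, Xb1]; linarith
            · rw [XA u₁ hu₁]; exact (bndA a haA).1
            · rw [Xb1, Xh]; linarith
            · rw [Xh]; linarith [(bndA a haA).2]
          · refine NI_disj_of' ?_ ?_ ?_ ?_
            · rw [Xb1, Xh]; linarith
            · rw [Xb1, XB v₁ hv₁]; linarith [hgap, hfv₃v₁]
            · rw [Xh]; linarith [(bndA a haA).2]
            · rw [XB v₁ hv₁]; linarith [(bndA a haA).2, hgap, hfv₃v₁]
        · rw [sdCongr _ _ _ _ e1, sdCongr _ _ _ _ e2, sd_b1l, sd_hl, if_neg hww] at hside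
          norm_num at hside
      · exact NIcongr _ _ _ _ _ _ _ _ e1 e2 (NI_shared _ _ _)
      · refine NIcongr _ _ _ _ _ _ _ _ e1 e2 (NI_disj_of ?_ ?_ ?_ ?_)
        · rw [Xb1, Xb2]; linarith
        · rw [Xb1]; linarith [(bndB d hdB).1, hgap]
        · rw [Xb2]; linarith [(bndA a haA).2]
        · linarith [(bndA a haA).2, (bndB d hdB).1, hgap]
    · -- C5 : s(u,v) = s(inr 2, inl b)
      rcases classify x y h2 with ⟨c, d, e2, hD'⟩ | (e2 | e2) | ⟨w', e2, hw'⟩ |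
        ⟨c, hcA, e2⟩ | ⟨d, hdB, e2⟩
      · rw [sdCongr _ _ _ _ e1, sdCongr _ _ _ _ e2, sd_b2l, sd_ll] at hside
        norm_num at hside
      · refine NIcongr _ _ _ _ _ _ _ _ e1 e2 (NI_disj_of' ?_ ?_ ?_ ?_)
        · rw [Xh, Xb2]; linarith
        · rw [Xh]; linarith [(bndB b hbB).1, hgap]
        · rw [Xb1, Xb2]; linarith
        · rw [Xb1]; linarith [(bndB b hbB).1, hgap]
      · exact NIcongr _ _ _ _ _ _ _ _ e1 e2 (NI_comm (NI_swap₁ (NI_shared _ _ _)))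
      · by_cases hww : w' = u₁ ∨ w' = v₁
        · refine NIcongr _ _ _ _ _ _ _ _ e1 e2 (NI_comm ?_)
          rcases hww with h3 | h3 <;> rw [h3]
          · refine NI_disj_of ?_ ?_ ?_ ?_
            · rw [Xh, Xb2]; linarith
            · rw [Xh]; linarith [(bndB b hbB).1, hgap]
            · rw [XA u₁ hu₁, Xb2]; linarith
            · rw [XA u₁ hu₁]; linarith [(bndB b hbB).1, hgap, hfu₁u₃]
          · refine NI_nested_of ?_ ?_ ?_ ?_
            · rw [Xh, Xb2]; linarith
            · rw [Xh]; linarith [(bndB b hbB).1, hgap]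
            · rw [Xb2, XB v₁ hv₁]; linarith [hgap, hfv₃v₁]
            · rw [XB v₁ hv₁]; linarith [(bndB b hbB).2]
        · rw [sdCongr _ _ _ _ e1, sdCongr _ _ _ _ e2, sd_b2l, sd_hl, if_neg hww] at hside
          norm_num at hside
      · refine NIcongr _ _ _ _ _ _ _ _ e1 e2 (NI_disj_of' ?_ ?_ ?_ ?_)
        · rw [Xb1, Xb2]; linarith
        · rw [Xb1]; linarith [(bndB b hbB).1, hgap]
        · rw [Xb2]; linarith [(bndA c hcA).2]
        · linarith [(bndA c hcA).2, (bndB b hbB).1, hgap]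
      · exact NIcongr _ _ _ _ _ _ _ _ e1 e2 (NI_shared _ _ _)
  refine ⟨{
    pos := fun w => (X w, 0),
    pos_inj := fun w w' hw => Xinj (congrArg Prod.fst hw),
    arc := fun u v _ => bump (X u) (X v) (sd u₁ v₁ u v),
    arc_symm := by
      intro u v h
      show bump (X v) (X u) (sd u₁ v₁ v u) = (bump (X u) (X v) (sd u₁ v₁ u v)).symm
      rw [bump_symm, sd_comm v u]
    arc_inj := by
      intro u v h t t' htt
      have hX : X u ≠ X v := fun e => h.ne (Xinj e)
      have h1 : X u + (t : ℝ) * (X v - X u) = X u + (t' : ℝ) * (X v - X u) :=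
        congrArg Prod.fst htt
      have hsub : X v - X u ≠ 0 := sub_ne_zero.mpr (Ne.symm hX)
      exact Subtype.ext (mul_right_cancel₀ hsub (by linarith))
    arc_avoid := by
      intro u v h w hw
      have hX : X u ≠ X v := fun e => h.ne (Xinj e)
      rw [mem_range_bump hX] at hw
      obtain ⟨z, hz1, hz2, hz⟩ := hw
      have h1 : X w = z := congrArg Prod.fst hz
      have h2 : (0 : ℝ) = sd u₁ v₁ u v * ((z - X u) * (X v - z)) := congrArg Prod.snd hz
      have h3 : (z - X u) * (X v - z) = 0 := by
        rcases mul_eq_zero.mp h2.symm with hh | hh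
        · exact absurd hh (sd_ne_zero u v)
        · exact hh
      rcases mul_eq_zero.mp h3 with hh | hh
      · exact Or.inl (Xinj (h1.trans (sub_eq_zero.mp hh)))
      · exact Or.inr (Xinj (h1.trans (sub_eq_zero.mp hh).symm))
    arcs_meet := by
      intro u v x y h h' hne p hp hp'
      have hm : s(u, v) ∈ S := ((SimpleGraph.fromEdgeSet_adj S).mp h).1
      have hm' : s(x, y) ∈ S := ((SimpleGraph.fromEdgeSet_adj S).mp h').1
      have hXuv : X u ≠ X v := fun e => h.ne (Xinj e)
      have hXxy : X x ≠ X y := fun e => h'.ne (Xinj e)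
      rw [mem_range_bump hXuv] at hp
      rw [mem_range_bump hXxy] at hp'
      obtain ⟨z, hz1, hz2, rfl⟩ := hp
      obtain ⟨z', hz1', hz2', hzz⟩ := hp'
      have hfst : z = z' := congrArg Prod.fst hzz
      subst hfst
      have hsnd : sd u₁ v₁ u v * ((z - X u) * (X v - z)) =
          sd u₁ v₁ x y * ((z - X x) * (X y - z)) := congrArg Prod.snd hzz
      have hPz : 0 ≤ (z - X u) * (X v - z) := btw_prod_nonneg hz1 hz2
      have hQz : 0 ≤ (z - X x) * (X y - z) := btw_prod_nonneg hz1' hz2'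
      have hend : z = X u ∨ z = X v →
          ((z, sd u₁ v₁ u v * ((z - X u) * (X v - z))) = (X u, 0) ∨
           (z, sd u₁ v₁ u v * ((z - X u) * (X v - z))) = (X v, 0)) := by
        rintro (rfl | rfl)
        · left; rw [Prod.mk.injEq]; exact ⟨rfl, by ring⟩
        · right; rw [Prod.mk.injEq]; exact ⟨rfl, by ring⟩
      apply hend
      by_cases hss : sd u₁ v₁ u v = sd u₁ v₁ x y
      · have hNI := NImain u v x y hm hm' hss
        have heq : (z - X u) * (X v - z) = (z - X x) * (X y - z) := by
          rw [hss] at hsnd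
          exact mul_left_cancel₀ (sd_ne_zero x y) hsnd
        have hneX : ¬((X u = X x ∧ X v = X y) ∨ (X u = X y ∧ X v = X x)) := by
          rintro (⟨q1, q2⟩ | ⟨q1, q2⟩)
          · exact hne (Sym2.eq_iff.mpr (Or.inl ⟨Xinj q1, Xinj q2⟩))
          · exact hne (Sym2.eq_iff.mpr (Or.inr ⟨Xinj q1, Xinj q2⟩))
        exact meet_same hXuv hXxy hNI hneX hz1 hz2 hz1' hz2' heq
      · rcases sd_unit (u₁ := u₁) (v₁ := v₁) u v with s1 | s1 <;>
          rcases sd_unit (u₁ := u₁) (v₁ := v₁) x y with s2 | s2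
        · exact absurd (s1.trans s2.symm) hss
        · have hzero : (z - X u) * (X v - z) = 0 := by
            rw [s1, s2] at hsnd; linarith
          rcases mul_eq_zero.mp hzero with hh | hh
          · exact Or.inl (sub_eq_zero.mp hh)
          · exact Or.inr (sub_eq_zero.mp hh).symm
        · have hzero : (z - X u) * (X v - z) = 0 := by
            rw [s1, s2] at hsnd; linarith
          rcases mul_eq_zero.mp hzero with hh | hh
          · exact Or.inl (sub_eq_zero.mp hh)
          · exact Or.inr (sub_eq_zero.mp hh).symm
        · exact absurd (s1.trans s2.symm) hss
    }⟩
end
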